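/- arXiv:1712.00928 — 5 statements merged into one kernel-verified Lean document; each statement's English description precedes it below -/
import Mathlib

section
/- Fix z ∈ ℂ and let (θ(z,·), θ^{[1]}(z,·)) and (φ(z,·), φ^{[1]}(z,·)) be the integrated solutions with the standard initial values. Suppose η, η¹ : [a,b] → ℂ satisfy, for all x ∈ [a,b], η(x) = ∫_a^x η¹(t)/p(t) dt and η¹(x) = ∫_a^x [(q(t) − z r(t)) η(t) − r(t) θ(z,t)] dt (i.e., η plays the role of the z-derivative θ̇(z,·) of θ, solving the z-differentiated equation with zero initial data at a). Then for all x ∈ [a,b]: η(x) = θ(z,x) ∫_a^x r(t) φ(z,t) θ(z,t) dt − φ(z,x) ∫_a^x r(t) θ(z,t)² dt, and η¹(x) = θ^{[1]}(z,x) ∫_a^x r(t) φ(z,t) θ(z,t) dt − φ^{[1]}(z,x) ∫_a^x r(t) θ(z,t)² dt. -/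
open MeasureTheory intervalIntegral Set

/-- Hypothesis 3.1: `r > 0` a.e. with `r ∈ L¹((a,b))`, `p > 0` a.e. with `1/p ∈ L¹((a,b))`,
and `q ∈ L¹((a,b))` (all real-valued). -/
def Hyp31 (a b : ℝ) (p q r : ℝ → ℝ) : Prop :=
  (∀ᵐ x ∂(volume.restrict (Ioo a b)), 0 < r x) ∧
  IntegrableOn r (Ioo a b) ∧
  (∀ᵐ x ∂(volume.restrict (Ioo a b)), 0 < p x) ∧
  IntegrableOn (fun x => 1 / p x) (Ioo a b) ∧
  IntegrableOn q (Ioo a b)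

/-- `(u, u1)` is an integrated solution of `-(p u')' + q u = z r u` on `[a,b]`
with initial values `u(a) = ua`, `u^[1](a) = u1a`. -/
def IsIntegratedSol (a b : ℝ) (p q r : ℝ → ℝ) (z : ℂ) (u u1 : ℝ → ℂ)
    (ua u1a : ℂ) : Prop :=
  IntervalIntegrable (fun t => u1 t / (p t : ℂ)) volume a b ∧
  IntervalIntegrable (fun t => ((q t : ℂ) - z * (r t : ℂ)) * u t) volume a b ∧
  (∀ x ∈ Icc a b, u x = ua + ∫ t in a..x, u1 t / (p t : ℂ)) ∧
  (∀ x ∈ Icc a b, u1 x = u1a + ∫ t in a..x, ((q t : ℂ) - z * (r t : ℂ)) * u t)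


lemma triangle_swap {K : Type*} [RCLike K] {a x : ℝ} {f g : ℝ → K}
    (hf : IntegrableOn f (Ioc a x)) (hg : IntegrableOn g (Ioc a x)) :
    ∫ t in Ioc a x, f t * ∫ s in Ioc a t, g s
      = ∫ s in Ioc a x, (∫ t in Ioc s x, f t) * g s := by
  set μ := volume.restrict (Ioc a x) with hμ
  have hfg : Integrable (fun z : ℝ × ℝ => f z.1 * g z.2) (μ.prod μ) := Integrable.mul_prod hf hg
  have hset : MeasurableSet {z : ℝ × ℝ | z.2 ≤ z.1} :=
    measurableSet_le measurable_snd measurable_fst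
  have hind : Integrable ({z : ℝ × ℝ | z.2 ≤ z.1}.indicator
      (fun z : ℝ × ℝ => f z.1 * g z.2)) (μ.prod μ) := hfg.indicator hset
  have swap := MeasureTheory.integral_integral_swap
    (f := fun t s => {z : ℝ × ℝ | z.2 ≤ z.1}.indicator
      (fun z : ℝ × ℝ => f z.1 * g z.2) (t, s)) (μ := μ) (ν := μ) hind
  have hL : (∫ t, ∫ s, {z : ℝ × ℝ | z.2 ≤ z.1}.indicator
      (fun z : ℝ × ℝ => f z.1 * g z.2) (t, s) ∂μ ∂μ)
      = ∫ t in Ioc a x, f t * ∫ s in Ioc a t, g s := by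
    rw [hμ]
    apply setIntegral_congr_fun measurableSet_Ioc
    intro t ht
    have : (fun s => {z : ℝ × ℝ | z.2 ≤ z.1}.indicator
        (fun z : ℝ × ℝ => f z.1 * g z.2) (t, s))
        = (Iic t).indicator (fun s => f t * g s) := by
      funext s
      by_cases h : s ≤ t <;> simp [Set.indicator_apply, h]
    beta_reduce
    rw [this, MeasureTheory.integral_indicator measurableSet_Iic,
      Measure.restrict_restrict measurableSet_Iic]
    have : Iic t ∩ Ioc a x = Ioc a t := by
      ext s
      simp only [mem_inter_iff, mem_Iic, mem_Ioc]
      exact ⟨fun h => ⟨h.2.1, h.1⟩, fun h => ⟨h.2, h.1, h.2.trans ht.2⟩⟩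
    rw [this, MeasureTheory.integral_const_mul]
  have hR : (∫ s, ∫ t, {z : ℝ × ℝ | z.2 ≤ z.1}.indicator
      (fun z : ℝ × ℝ => f z.1 * g z.2) (t, s) ∂μ ∂μ)
      = ∫ s in Ioc a x, (∫ t in Ioc s x, f t) * g s := by
    rw [hμ]
    apply setIntegral_congr_fun measurableSet_Ioc
    intro s hs
    have : (fun t => {z : ℝ × ℝ | z.2 ≤ z.1}.indicator
        (fun z : ℝ × ℝ => f z.1 * g z.2) (t, s))
        = (Ici s).indicator (fun t => f t * g s) := by
      funext t
      by_cases h : s ≤ t <;> simp [Set.indicator_apply, h]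
    beta_reduce
    rw [this, MeasureTheory.integral_indicator measurableSet_Ici,
      Measure.restrict_restrict measurableSet_Ici]
    have h1 : Ici s ∩ Ioc a x = Icc s x := by
      ext t
      simp only [mem_inter_iff, mem_Ici, mem_Ioc, mem_Icc]
      exact ⟨fun h => ⟨h.1, h.2.2⟩, fun h => ⟨h.1, hs.1.trans_le h.1, h.2⟩⟩
    rw [h1, integral_Icc_eq_integral_Ioc, MeasureTheory.integral_mul_const]
  rw [← hL, ← hR] at *
  exact swap

lemma primMul {K : Type*} [RCLike K] {a b : ℝ} {f g : ℝ → K}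
    (hf : IntervalIntegrable f volume a b) (hg : IntervalIntegrable g volume a b)
    (c d : K) {x : ℝ} (hx : x ∈ Icc a b) :
    (c + ∫ t in a..x, f t) * (d + ∫ t in a..x, g t)
      = c * d + ∫ t in a..x,
          (f t * (d + ∫ s in a..t, g s) + (c + ∫ s in a..t, f s) * g t) := by
  have hax : a ≤ x := hx.1
  have hsub : uIcc a x ⊆ uIcc a b :=
    uIcc_subset_uIcc left_mem_uIcc (mem_uIcc.2 (Or.inl ⟨hax, hx.2⟩))
  have hf' : IntervalIntegrable f volume a x := hf.mono_set hsub
  have hg' : IntervalIntegrable g volume a x := hg.mono_set hsub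
  have hF0 : ContinuousOn (fun t => ∫ s in a..t, f s) (uIcc a x) :=
    intervalIntegral.continuousOn_primitive_interval' hf' left_mem_uIcc
  have hG0 : ContinuousOn (fun t => ∫ s in a..t, g s) (uIcc a x) :=
    intervalIntegral.continuousOn_primitive_interval' hg' left_mem_uIcc
  have h4 : IntervalIntegrable (fun t => f t * d) volume a x := hf'.mul_const d
  have h5 : IntervalIntegrable (fun t => f t * (∫ s in a..t, g s)) volume a x :=
    hf'.mul_continuousOn hG0
  have h6 : IntervalIntegrable (fun t => c * g t) volume a x := hg'.const_mul c
  have h7 : IntervalIntegrable (fun t => (∫ s in a..t, f s) * g t) volume a x :=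
    hg'.continuousOn_mul hF0
  have e1 : (∫ t in a..x,
        (f t * (d + ∫ s in a..t, g s) + (c + ∫ s in a..t, f s) * g t))
      = ((∫ t in a..x, f t * d) + ∫ t in a..x, f t * (∫ s in a..t, g s))
        + ((∫ t in a..x, c * g t) + ∫ t in a..x, (∫ s in a..t, f s) * g t) := by
    rw [← intervalIntegral.integral_add h4 h5, ← intervalIntegral.integral_add h6 h7,
      ← intervalIntegral.integral_add (h4.add h5) (h6.add h7)]
    apply intervalIntegral.integral_congr
    intro t _
    ring
  have hfIoc : IntegrableOn f (Ioc a x) volume :=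
    (intervalIntegrable_iff_integrableOn_Ioc_of_le hax).1 hf'
  have hgIoc : IntegrableOn g (Ioc a x) volume :=
    (intervalIntegrable_iff_integrableOn_Ioc_of_le hax).1 hg'
  have swap : (∫ t in a..x, f t * (∫ s in a..t, g s))
      = ∫ s in a..x, (∫ t in s..x, f t) * g s := by
    rw [intervalIntegral.integral_of_le hax, intervalIntegral.integral_of_le hax]
    have l1 : (∫ t in Ioc a x, f t * (∫ s in a..t, g s))
        = ∫ t in Ioc a x, f t * (∫ s in Ioc a t, g s) := by
      apply setIntegral_congr_fun measurableSet_Ioc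
      intro t ht
      beta_reduce
      rw [intervalIntegral.integral_of_le ht.1.le]
    have l2 : (∫ s in Ioc a x, (∫ t in s..x, f t) * g s)
        = ∫ s in Ioc a x, (∫ t in Ioc s x, f t) * g s := by
      apply setIntegral_congr_fun measurableSet_Ioc
      intro s hs
      beta_reduce
      rw [intervalIntegral.integral_of_le hs.2]
    rw [l1, l2]
    exact triangle_swap hfIoc hgIoc
  have e2 : (∫ s in a..x, (∫ t in s..x, f t) * g s)
      = ∫ s in a..x, ((∫ t in a..x, f t) * g s - (∫ t in a..s, f t) * g s) := by
    apply intervalIntegral.integral_congr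
    intro s hs
    beta_reduce
    rw [← intervalIntegral.integral_interval_sub_left hf' (hf'.mono_set
      (uIcc_subset_uIcc left_mem_uIcc hs)), sub_mul]
  have e3 : (∫ s in a..x, ((∫ t in a..x, f t) * g s - (∫ t in a..s, f t) * g s))
      = (∫ t in a..x, f t) * (∫ s in a..x, g s)
        - ∫ s in a..x, (∫ t in a..s, f t) * g s := by
    rw [intervalIntegral.integral_sub (hg'.const_mul _) h7,
      intervalIntegral.integral_const_mul]
  rw [e1, swap, e2, e3, intervalIntegral.integral_mul_const,
    intervalIntegral.integral_const_mul]
  ring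

lemma solCont {K : Type*} [RCLike K] {a b : ℝ} (hab : a ≤ b) {fu u : ℝ → K} {ua : K}
    (hfu : IntervalIntegrable fu volume a b)
    (hu : ∀ x ∈ Icc a b, u x = ua + ∫ t in a..x, fu t) :
    ContinuousOn u (Icc a b) := by
  have h : ContinuousOn (fun x => ua + ∫ t in a..x, fu t) (uIcc a b) :=
    continuousOn_const.add
      (intervalIntegral.continuousOn_primitive_interval' hfu left_mem_uIcc)
  rw [uIcc_of_le hab] at h
  exact h.congr fun x hx => hu x hx

lemma prodRule {K : Type*} [RCLike K] {a b : ℝ} {u v fu gv : ℝ → K} {ua va : K}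
    (hfu : IntervalIntegrable fu volume a b) (hgv : IntervalIntegrable gv volume a b)
    (hu : ∀ x ∈ Icc a b, u x = ua + ∫ t in a..x, fu t)
    (hv : ∀ x ∈ Icc a b, v x = va + ∫ t in a..x, gv t) :
    ∀ x ∈ Icc a b, u x * v x = ua * va + ∫ t in a..x, (fu t * v t + u t * gv t) := by
  intro x hx
  rw [hu x hx, hv x hx, primMul hfu hgv ua va hx]
  congr 1
  apply intervalIntegral.integral_congr
  intro t ht
  rw [uIcc_of_le hx.1] at ht
  have ht' : t ∈ Icc a b := ⟨ht.1, ht.2.trans hx.2⟩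
  beta_reduce
  rw [hu t ht', hv t ht']

lemma powRule {a b : ℝ} (hab : a ≤ b) {g : ℝ → ℝ}
    (hg : IntervalIntegrable g volume a b) : ∀ n : ℕ, ∀ x ∈ Icc a b,
    (∫ t in a..x, g t) ^ (n + 1)
      = (n + 1 : ℝ) * ∫ t in a..x, g t * (∫ s in a..t, g s) ^ n := by
  have hGc : ContinuousOn (fun x => ∫ t in a..x, g t) (uIcc a b) :=
    intervalIntegral.continuousOn_primitive_interval' hg left_mem_uIcc
  intro n
  induction n with
  | zero => intro x _; simp
  | succ n ih =>
    intro x hx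
    have hgv : IntervalIntegrable
        (fun t => ((n : ℝ) + 1) * (g t * (∫ s in a..t, g s) ^ n)) volume a b :=
      (hg.mul_continuousOn (hGc.pow n)).const_mul _
    have hv : ∀ y ∈ Icc a b, (∫ t in a..y, g t) ^ (n + 1)
        = 0 + ∫ t in a..y, ((n : ℝ) + 1) * (g t * (∫ s in a..t, g s) ^ n) := by
      intro y hy
      rw [zero_add, intervalIntegral.integral_const_mul]
      push_cast at ih ⊢
      exact ih y hy
    have hu : ∀ y ∈ Icc a b, (∫ t in a..y, g t) = 0 + ∫ t in a..y, g t := by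
      intro y _; rw [zero_add]
    have key := prodRule (K := ℝ) hg hgv hu hv x hx
    have e : (∫ t in a..x,
          (g t * (∫ s in a..t, g s) ^ (n + 1)
            + (∫ s in a..t, g s) * (((n : ℝ) + 1) * (g t * (∫ s in a..t, g s) ^ n))))
        = ((n : ℝ) + 2) * ∫ t in a..x, g t * (∫ s in a..t, g s) ^ (n + 1) := by
      rw [← intervalIntegral.integral_const_mul]
      apply intervalIntegral.integral_congr
      intro t _
      beta_reduce
      ring
    rw [e, zero_mul, zero_add] at key
    calc (∫ t in a..x, g t) ^ (n + 1 + 1)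
        = (∫ t in a..x, g t) * (∫ t in a..x, g t) ^ (n + 1) := by ring
      _ = ((n : ℝ) + 2) * ∫ t in a..x, g t * (∫ s in a..t, g s) ^ (n + 1) := key
      _ = (((n : ℕ) + 1 : ℕ) + 1 : ℝ) * ∫ t in a..x, g t * (∫ s in a..t, g s) ^ (n + 1) := by
          push_cast; ring

lemma uniq {a b : ℝ} (hab : a ≤ b) {k1 k2 : ℝ → ℂ}
    (hk1 : IntervalIntegrable k1 volume a b) (hk2 : IntervalIntegrable k2 volume a b)
    {w w1 : ℝ → ℂ}
    (hwc : ContinuousOn w (Icc a b)) (hw1c : ContinuousOn w1 (Icc a b))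
    (hw : ∀ x ∈ Icc a b, w x = ∫ t in a..x, k1 t * w1 t)
    (hw1 : ∀ x ∈ Icc a b, w1 x = ∫ t in a..x, k2 t * w t) :
    ∀ x ∈ Icc a b, w x = 0 ∧ w1 x = 0 := by
  set g : ℝ → ℝ := fun t => ‖k1 t‖ + ‖k2 t‖ with hgdef
  have hgi : IntervalIntegrable g volume a b := hk1.norm.add hk2.norm
  have hg0 : ∀ t, 0 ≤ g t := fun t => add_nonneg (norm_nonneg _) (norm_nonneg _)
  set M : ℝ → ℝ := fun t => ‖w t‖ + ‖w1 t‖ with hMdef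
  have hMc : ContinuousOn M (Icc a b) := hwc.norm.add hw1c.norm
  have hM0 : ∀ t, 0 ≤ M t := fun t => add_nonneg (norm_nonneg _) (norm_nonneg _)
  have hMcu : ContinuousOn M (uIcc a b) := by rwa [uIcc_of_le hab]
  have hwcu : ContinuousOn w (uIcc a b) := by rwa [uIcc_of_le hab]
  have hw1cu : ContinuousOn w1 (uIcc a b) := by rwa [uIcc_of_le hab]
  obtain ⟨C, hC⟩ := isCompact_Icc.exists_bound_of_continuousOn hMc
  have hC' : ∀ x ∈ Icc a b, M x ≤ C := fun x hx => (le_abs_self _).trans (hC x hx)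
  have hi1 : IntervalIntegrable (fun t => k1 t * w1 t) volume a b :=
    hk1.mul_continuousOn hw1cu
  have hi2 : IntervalIntegrable (fun t => k2 t * w t) volume a b :=
    hk2.mul_continuousOn hwcu
  have hgM : IntervalIntegrable (fun t => g t * M t) volume a b :=
    hgi.mul_continuousOn hMcu
  have hk1M : IntervalIntegrable (fun t => ‖k1 t‖ * M t) volume a b :=
    hk1.norm.mul_continuousOn hMcu
  have hk2M : IntervalIntegrable (fun t => ‖k2 t‖ * M t) volume a b :=
    hk2.norm.mul_continuousOn hMcu
  have subs : ∀ x ∈ Icc a b, uIcc a x ⊆ uIcc a b := fun x hx =>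
    uIcc_subset_uIcc left_mem_uIcc (mem_uIcc.2 (Or.inl ⟨hx.1, hx.2⟩))
  have hrec : ∀ x ∈ Icc a b, M x ≤ ∫ t in a..x, g t * M t := by
    intro x hx
    have hax : a ≤ x := hx.1
    have hsub := subs x hx
    have b1 : ‖w x‖ ≤ ∫ t in a..x, ‖k1 t‖ * M t := by
      rw [hw x hx]
      refine (intervalIntegral.norm_integral_le_integral_norm hax).trans ?_
      refine intervalIntegral.integral_mono_on hax ((hi1.mono_set hsub).norm)
        (hk1M.mono_set hsub) fun t ht => ?_
      calc ‖k1 t * w1 t‖ = ‖k1 t‖ * ‖w1 t‖ := norm_mul _ _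
        _ ≤ ‖k1 t‖ * M t :=
            mul_le_mul_of_nonneg_left (le_add_of_nonneg_left (norm_nonneg _))
              (norm_nonneg _)
    have b2 : ‖w1 x‖ ≤ ∫ t in a..x, ‖k2 t‖ * M t := by
      rw [hw1 x hx]
      refine (intervalIntegral.norm_integral_le_integral_norm hax).trans ?_
      refine intervalIntegral.integral_mono_on hax ((hi2.mono_set hsub).norm)
        (hk2M.mono_set hsub) fun t ht => ?_
      calc ‖k2 t * w t‖ = ‖k2 t‖ * ‖w t‖ := norm_mul _ _
        _ ≤ ‖k2 t‖ * M t :=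
            mul_le_mul_of_nonneg_left (le_add_of_nonneg_right (norm_nonneg _))
              (norm_nonneg _)
    have e : (∫ t in a..x, ‖k1 t‖ * M t) + (∫ t in a..x, ‖k2 t‖ * M t)
        = ∫ t in a..x, g t * M t := by
      rw [← intervalIntegral.integral_add (hk1M.mono_set hsub) (hk2M.mono_set hsub)]
      apply intervalIntegral.integral_congr
      intro t _
      simp only [hgdef]
      ring
    calc M x = ‖w x‖ + ‖w1 x‖ := rfl
      _ ≤ (∫ t in a..x, ‖k1 t‖ * M t) + (∫ t in a..x, ‖k2 t‖ * M t) := add_le_add b1 b2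
      _ = ∫ t in a..x, g t * M t := e
  set G : ℝ → ℝ := fun x => ∫ t in a..x, g t with hGdef
  have hGcu : ContinuousOn G (uIcc a b) :=
    intervalIntegral.continuousOn_primitive_interval' hgi left_mem_uIcc
  have bound : ∀ n : ℕ, ∀ x ∈ Icc a b, M x ≤ C * G x ^ n / n.factorial := by
    intro n
    induction n with
    | zero => intro x hx; simpa using hC' x hx
    | succ n ih =>
      intro x hx
      have hax : a ≤ x := hx.1
      have hsub := subs x hx
      refine (hrec x hx).trans ?_
      have hgGn : IntervalIntegrable (fun t => g t * (C * G t ^ n / n.factorial))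
          volume a b :=
        hgi.mul_continuousOn ((continuousOn_const.mul (hGcu.pow n)).div_const _)
      have step1 : (∫ t in a..x, g t * M t)
          ≤ ∫ t in a..x, g t * (C * G t ^ n / n.factorial) := by
        refine intervalIntegral.integral_mono_on hax (hgM.mono_set hsub)
          (hgGn.mono_set hsub) fun t ht => ?_
        exact mul_le_mul_of_nonneg_left (ih t ⟨ht.1, ht.2.trans hx.2⟩) (hg0 t)
      refine step1.trans ?_
      have step2 : (∫ t in a..x, g t * (C * G t ^ n / n.factorial))
          = (C / n.factorial) * ∫ t in a..x, g t * G t ^ n := by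
        rw [← intervalIntegral.integral_const_mul]
        apply intervalIntegral.integral_congr
        intro t _
        ring
      have step3 := powRule hab hgi n x hx
      rw [step2]
      have hfac : (0:ℝ) < n.factorial := by positivity
      have hGx : G x ^ (n+1) = ((n:ℝ)+1) * ∫ t in a..x, g t * G t ^ n := step3
      have hn1 : ((n:ℝ)+1) ≠ 0 := by positivity
      have heq : (∫ t in a..x, g t * G t ^ n) = G x ^ (n+1) / ((n:ℝ)+1) := by
        rw [hGx]; field_simp
      rw [heq]
      apply le_of_eq
      have hfs : ((n+1).factorial : ℝ) = ((n:ℝ)+1) * n.factorial := by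
        rw [Nat.factorial_succ]; push_cast; ring
      rw [hfs, div_mul_div_comm]
      ring
  intro x hx
  have hGx0 : 0 ≤ G x := intervalIntegral.integral_nonneg hx.1 fun t _ => hg0 t
  have tend : Filter.Tendsto (fun n : ℕ => C * G x ^ n / n.factorial)
      Filter.atTop (nhds 0) := by
    have h0 := FloorSemiring.tendsto_pow_div_factorial_atTop (K := ℝ) (G x)
    have := h0.const_mul C
    simpa [mul_div_assoc] using this
  have hM0x : M x ≤ 0 := ge_of_tendsto' tend fun n => bound n x hx
  have hMeq : M x = 0 := le_antisymm hM0x (hM0 x)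
  have hn1 : (0:ℝ) ≤ ‖w x‖ := norm_nonneg _
  have hn2 : (0:ℝ) ≤ ‖w1 x‖ := norm_nonneg _
  have hMeq' : ‖w x‖ + ‖w1 x‖ = 0 := hMeq
  exact ⟨norm_eq_zero.1 (by linarith), norm_eq_zero.1 (by linarith)⟩

set_option maxHeartbeats 1000000 in
theorem statement0 (a b : ℝ) (hab : a < b) (p q r : ℝ → ℝ)
    (hpqr : Hyp31 a b p q r) (z : ℂ)
    (θ θ1 φ φ1 η η1 : ℝ → ℂ)
    (hθ : IsIntegratedSol a b p q r z θ θ1 1 0)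
    (hφ : IsIntegratedSol a b p q r z φ φ1 0 1)
    (hηi : IntervalIntegrable (fun t => η1 t / (p t : ℂ)) volume a b)
    (hη1i : IntervalIntegrable
      (fun t => ((q t : ℂ) - z * (r t : ℂ)) * η t - (r t : ℂ) * θ t) volume a b)
    (hη : ∀ x ∈ Icc a b, η x = ∫ t in a..x, η1 t / (p t : ℂ))
    (hη1 : ∀ x ∈ Icc a b,
      η1 x = ∫ t in a..x, (((q t : ℂ) - z * (r t : ℂ)) * η t - (r t : ℂ) * θ t)) :
    ∀ x ∈ Icc a b,
      η x = θ x * (∫ t in a..x, (r t : ℂ) * φ t * θ t)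
              - φ x * (∫ t in a..x, (r t : ℂ) * θ t ^ 2) ∧
      η1 x = θ1 x * (∫ t in a..x, (r t : ℂ) * φ t * θ t)
              - φ1 x * (∫ t in a..x, (r t : ℂ) * θ t ^ 2) := by
  obtain ⟨-, hr_int, -, hpinv_int, hq_int⟩ := hpqr
  obtain ⟨hθi1, hθi2, hθe, hθ1e⟩ := hθ
  obtain ⟨hφi1, hφi2, hφe, hφ1e⟩ := hφ
  have hab' : a ≤ b := hab.le
  have hIcc : uIcc a b = Icc a b := uIcc_of_le hab'
  -- coercion of real integrable coefficients
  have coer : ∀ {f : ℝ → ℝ}, IntegrableOn f (Ioo a b) →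
      IntervalIntegrable (fun t => (f t : ℂ)) volume a b := by
    intro f hf
    rw [intervalIntegrable_iff_integrableOn_Ioc_of_le hab']
    exact (hf.congr_set_ae Ioo_ae_eq_Ioc.symm).ofReal
  have hrC : IntervalIntegrable (fun t => (r t : ℂ)) volume a b := coer hr_int
  have hqC : IntervalIntegrable (fun t => (q t : ℂ)) volume a b := coer hq_int
  have hk1C : IntervalIntegrable (fun t => ((1 / p t : ℝ) : ℂ)) volume a b :=
    coer hpinv_int
  have hk2C : IntervalIntegrable (fun t => (q t : ℂ) - z * (r t : ℂ)) volume a b :=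
    hqC.sub (hrC.const_mul z)
  -- continuity of solutions
  have hθc : ContinuousOn θ (Icc a b) := solCont hab' hθi1 hθe
  have hθ1c : ContinuousOn θ1 (Icc a b) := solCont hab' hθi2 hθ1e
  have hφc : ContinuousOn φ (Icc a b) := solCont hab' hφi1 hφe
  have hφ1c : ContinuousOn φ1 (Icc a b) := solCont hab' hφi2 hφ1e
  have hθcu : ContinuousOn θ (uIcc a b) := hIcc ▸ hθc
  have hθ1cu : ContinuousOn θ1 (uIcc a b) := hIcc ▸ hθ1c
  have hφcu : ContinuousOn φ (uIcc a b) := hIcc ▸ hφc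
  have hφ1cu : ContinuousOn φ1 (uIcc a b) := hIcc ▸ hφ1c
  -- the two inhomogeneous integrands
  have hrφθ : IntervalIntegrable (fun t => (r t : ℂ) * φ t * θ t) volume a b :=
    (hrC.mul_continuousOn hφcu).mul_continuousOn hθcu
  have hrθ2 : IntervalIntegrable (fun t => (r t : ℂ) * θ t ^ 2) volume a b :=
    hrC.mul_continuousOn (hθcu.pow 2)
  have hAcu : ContinuousOn (fun x => ∫ t in a..x, (r t : ℂ) * φ t * θ t) (uIcc a b) :=
    intervalIntegral.continuousOn_primitive_interval' hrφθ left_mem_uIcc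
  have hBcu : ContinuousOn (fun x => ∫ t in a..x, (r t : ℂ) * θ t ^ 2) (uIcc a b) :=
    intervalIntegral.continuousOn_primitive_interval' hrθ2 left_mem_uIcc
  have hAc : ContinuousOn (fun x => ∫ t in a..x, (r t : ℂ) * φ t * θ t) (Icc a b) :=
    hIcc ▸ hAcu
  have hBc : ContinuousOn (fun x => ∫ t in a..x, (r t : ℂ) * θ t ^ 2) (Icc a b) :=
    hIcc ▸ hBcu
  have hAe : ∀ x ∈ Icc a b, (∫ t in a..x, (r t : ℂ) * φ t * θ t)
      = 0 + ∫ t in a..x, (r t : ℂ) * φ t * θ t := fun x _ => (zero_add _).symm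
  have hBe : ∀ x ∈ Icc a b, (∫ t in a..x, (r t : ℂ) * θ t ^ 2)
      = 0 + ∫ t in a..x, (r t : ℂ) * θ t ^ 2 := fun x _ => (zero_add _).symm
  have subs : ∀ x ∈ Icc a b, uIcc a x ⊆ uIcc a b := fun x hx =>
    uIcc_subset_uIcc left_mem_uIcc (mem_uIcc.2 (Or.inl ⟨hx.1, hx.2⟩))
  -- Wronskian
  have W1 := prodRule hθi1 hφi2 hθe hφ1e
  have W2 := prodRule hθi2 hφi1 hθ1e hφe
  have jW1 : IntervalIntegrable
      (fun t => θ1 t / (p t : ℂ) * φ1 t + θ t * (((q t : ℂ) - z * (r t : ℂ)) * φ t))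
      volume a b := (hθi1.mul_continuousOn hφ1cu).add (hφi2.continuousOn_mul hθcu)
  have jW2 : IntervalIntegrable
      (fun t => ((q t : ℂ) - z * (r t : ℂ)) * θ t * φ t + θ1 t * (φ1 t / (p t : ℂ)))
      volume a b := (hθi2.mul_continuousOn hφcu).add (hφi1.continuousOn_mul hθ1cu)
  have hW : ∀ x ∈ Icc a b, θ x * φ1 x - θ1 x * φ x = 1 := by
    intro x hx
    rw [W1 x hx, W2 x hx]
    have hs := intervalIntegral.integral_sub
      (jW1.mono_set (subs x hx)) (jW2.mono_set (subs x hx))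
    have e0 : (∫ t in a..x,
        ((θ1 t / (p t : ℂ) * φ1 t + θ t * (((q t : ℂ) - z * (r t : ℂ)) * φ t))
          - (((q t : ℂ) - z * (r t : ℂ)) * θ t * φ t + θ1 t * (φ1 t / (p t : ℂ)))))
        = ∫ t in a..x, (0 : ℂ) := by
      apply intervalIntegral.integral_congr
      intro t _
      beta_reduce
      ring
    rw [e0] at hs
    simp only [intervalIntegral.integral_zero] at hs
    linear_combination hs.symm
  -- variation-of-constants candidate
  have E1 := prodRule hθi1 hrφθ hθe hAe
  have E2 := prodRule hφi1 hrθ2 hφe hBe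
  have E3 := prodRule hθi2 hrφθ hθ1e hAe
  have E4 := prodRule hφi2 hrθ2 hφ1e hBe
  have j1 : IntervalIntegrable (fun t => θ1 t / (p t : ℂ)
      * (∫ s in a..t, (r s : ℂ) * φ s * θ s)
      + θ t * ((r t : ℂ) * φ t * θ t)) volume a b :=
    (hθi1.mul_continuousOn hAcu).add (hrφθ.continuousOn_mul hθcu)
  have j2 : IntervalIntegrable (fun t => φ1 t / (p t : ℂ)
      * (∫ s in a..t, (r s : ℂ) * θ s ^ 2)
      + φ t * ((r t : ℂ) * θ t ^ 2)) volume a b :=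
    (hφi1.mul_continuousOn hBcu).add (hrθ2.continuousOn_mul hφcu)
  have j3 : IntervalIntegrable (fun t => ((q t : ℂ) - z * (r t : ℂ)) * θ t
      * (∫ s in a..t, (r s : ℂ) * φ s * θ s)
      + θ1 t * ((r t : ℂ) * φ t * θ t)) volume a b :=
    (hθi2.mul_continuousOn hAcu).add (hrφθ.continuousOn_mul hθ1cu)
  have j4 : IntervalIntegrable (fun t => ((q t : ℂ) - z * (r t : ℂ)) * φ t
      * (∫ s in a..t, (r s : ℂ) * θ s ^ 2)
      + φ1 t * ((r t : ℂ) * θ t ^ 2)) volume a b :=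
    (hφi2.mul_continuousOn hBcu).add (hrθ2.continuousOn_mul hφ1cu)
  have hξe : ∀ x ∈ Icc a b,
      θ x * (∫ t in a..x, (r t : ℂ) * φ t * θ t)
        - φ x * (∫ t in a..x, (r t : ℂ) * θ t ^ 2)
      = ∫ t in a..x, ((1 / p t : ℝ) : ℂ)
          * (θ1 t * (∫ s in a..t, (r s : ℂ) * φ s * θ s)
             - φ1 t * (∫ s in a..t, (r s : ℂ) * θ s ^ 2)) := by
    intro x hx
    rw [E1 x hx, E2 x hx]
    have hs := intervalIntegral.integral_sub (j1.mono_set (subs x hx))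
      (j2.mono_set (subs x hx))
    have e0 : (∫ t in a..x,
        ((θ1 t / (p t : ℂ) * (∫ s in a..t, (r s : ℂ) * φ s * θ s)
            + θ t * ((r t : ℂ) * φ t * θ t))
          - (φ1 t / (p t : ℂ) * (∫ s in a..t, (r s : ℂ) * θ s ^ 2)
            + φ t * ((r t : ℂ) * θ t ^ 2))))
        = ∫ t in a..x, ((1 / p t : ℝ) : ℂ)
            * (θ1 t * (∫ s in a..t, (r s : ℂ) * φ s * θ s)
               - φ1 t * (∫ s in a..t, (r s : ℂ) * θ s ^ 2)) := by
      apply intervalIntegral.integral_congr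
      intro t _
      beta_reduce
      push_cast
      ring
    rw [e0] at hs
    linear_combination hs.symm
  have hξ1e : ∀ x ∈ Icc a b,
      θ1 x * (∫ t in a..x, (r t : ℂ) * φ t * θ t)
        - φ1 x * (∫ t in a..x, (r t : ℂ) * θ t ^ 2)
      = ∫ t in a..x, (((q t : ℂ) - z * (r t : ℂ))
          * (θ t * (∫ s in a..t, (r s : ℂ) * φ s * θ s)
             - φ t * (∫ s in a..t, (r s : ℂ) * θ s ^ 2))
          - (r t : ℂ) * θ t) := by
    intro x hx
    rw [E3 x hx, E4 x hx]
    have hs := intervalIntegral.integral_sub (j3.mono_set (subs x hx))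
      (j4.mono_set (subs x hx))
    have e0 : (∫ t in a..x,
        ((((q t : ℂ) - z * (r t : ℂ)) * θ t * (∫ s in a..t, (r s : ℂ) * φ s * θ s)
            + θ1 t * ((r t : ℂ) * φ t * θ t))
          - (((q t : ℂ) - z * (r t : ℂ)) * φ t * (∫ s in a..t, (r s : ℂ) * θ s ^ 2)
            + φ1 t * ((r t : ℂ) * θ t ^ 2))))
        = ∫ t in a..x, (((q t : ℂ) - z * (r t : ℂ))
            * (θ t * (∫ s in a..t, (r s : ℂ) * φ s * θ s)
               - φ t * (∫ s in a..t, (r s : ℂ) * θ s ^ 2))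
            - (r t : ℂ) * θ t) := by
      apply intervalIntegral.integral_congr
      intro t ht
      rw [uIcc_of_le hx.1] at ht
      have htb : t ∈ Icc a b := ⟨ht.1, ht.2.trans hx.2⟩
      have hWt := hW t htb
      beta_reduce
      linear_combination (-(r t : ℂ) * θ t) * hWt
    rw [e0] at hs
    linear_combination hs.symm
  -- uniqueness argument
  have hηe0 : ∀ x ∈ Icc a b, η x = 0 + ∫ t in a..x, η1 t / (p t : ℂ) := by
    intro x hx; rw [zero_add]; exact hη x hx
  have hη1e0 : ∀ x ∈ Icc a b, η1 x
      = 0 + ∫ t in a..x, (((q t : ℂ) - z * (r t : ℂ)) * η t - (r t : ℂ) * θ t) := by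
    intro x hx; rw [zero_add]; exact hη1 x hx
  have hηc : ContinuousOn η (Icc a b) := solCont hab' hηi hηe0
  have hη1c : ContinuousOn η1 (Icc a b) := solCont hab' hη1i hη1e0
  have hξc : ContinuousOn (fun t => θ t * (∫ s in a..t, (r s : ℂ) * φ s * θ s)
      - φ t * (∫ s in a..t, (r s : ℂ) * θ s ^ 2)) (Icc a b) :=
    (hθc.mul hAc).sub (hφc.mul hBc)
  have hξ1c : ContinuousOn (fun t => θ1 t * (∫ s in a..t, (r s : ℂ) * φ s * θ s)
      - φ1 t * (∫ s in a..t, (r s : ℂ) * θ s ^ 2)) (Icc a b) :=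
    (hθ1c.mul hAc).sub (hφ1c.mul hBc)
  have hξcu : ContinuousOn (fun t => θ t * (∫ s in a..t, (r s : ℂ) * φ s * θ s)
      - φ t * (∫ s in a..t, (r s : ℂ) * θ s ^ 2)) (uIcc a b) := hIcc ▸ hξc
  have hξ1cu : ContinuousOn (fun t => θ1 t * (∫ s in a..t, (r s : ℂ) * φ s * θ s)
      - φ1 t * (∫ s in a..t, (r s : ℂ) * θ s ^ 2)) (uIcc a b) := hIcc ▸ hξ1c
  have hiξ1 : IntervalIntegrable (fun t => ((1 / p t : ℝ) : ℂ)
      * (θ1 t * (∫ s in a..t, (r s : ℂ) * φ s * θ s)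
         - φ1 t * (∫ s in a..t, (r s : ℂ) * θ s ^ 2))) volume a b :=
    hk1C.mul_continuousOn hξ1cu
  have hiξ : IntervalIntegrable (fun t => (((q t : ℂ) - z * (r t : ℂ))
      * (θ t * (∫ s in a..t, (r s : ℂ) * φ s * θ s)
         - φ t * (∫ s in a..t, (r s : ℂ) * θ s ^ 2))
      - (r t : ℂ) * θ t)) volume a b :=
    (hk2C.mul_continuousOn hξcu).sub (hrC.mul_continuousOn hθcu)
  have hw : ∀ x ∈ Icc a b,
      η x - (θ x * (∫ s in a..x, (r s : ℂ) * φ s * θ s)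
        - φ x * (∫ s in a..x, (r s : ℂ) * θ s ^ 2))
      = ∫ t in a..x, ((1 / p t : ℝ) : ℂ)
          * (η1 t - (θ1 t * (∫ s in a..t, (r s : ℂ) * φ s * θ s)
             - φ1 t * (∫ s in a..t, (r s : ℂ) * θ s ^ 2))) := by
    intro x hx
    rw [hη x hx, hξe x hx]
    rw [← intervalIntegral.integral_sub (hηi.mono_set (subs x hx))
      (hiξ1.mono_set (subs x hx))]
    apply intervalIntegral.integral_congr
    intro t _
    beta_reduce
    push_cast
    ring
  have hw1 : ∀ x ∈ Icc a b,
      η1 x - (θ1 x * (∫ s in a..x, (r s : ℂ) * φ s * θ s)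
        - φ1 x * (∫ s in a..x, (r s : ℂ) * θ s ^ 2))
      = ∫ t in a..x, (((q t : ℂ) - z * (r t : ℂ))
          * (η t - (θ t * (∫ s in a..t, (r s : ℂ) * φ s * θ s)
             - φ t * (∫ s in a..t, (r s : ℂ) * θ s ^ 2)))) := by
    intro x hx
    rw [hη1 x hx, hξ1e x hx]
    rw [← intervalIntegral.integral_sub (hη1i.mono_set (subs x hx))
      (hiξ.mono_set (subs x hx))]
    apply intervalIntegral.integral_congr
    intro t _
    beta_reduce
    ring
  have huniq := uniq hab' hk1C hk2C
    (w := fun t => η t - (θ t * (∫ s in a..t, (r s : ℂ) * φ s * θ s)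
      - φ t * (∫ s in a..t, (r s : ℂ) * θ s ^ 2)))
    (w1 := fun t => η1 t - (θ1 t * (∫ s in a..t, (r s : ℂ) * φ s * θ s)
      - φ1 t * (∫ s in a..t, (r s : ℂ) * θ s ^ 2)))
    (hηc.sub hξc) (hη1c.sub hξ1c) hw hw1
  intro x hx
  obtain ⟨e1, e2⟩ := huniq x hx
  exact ⟨sub_eq_zero.1 e1, sub_eq_zero.1 e2⟩
end

section
/- Fix λ ∈ ℝ and suppose the integrated solutions θ(λ,·) and φ(λ,·) with the standard initial values are real-valued on [a,b]. Then for every x ∈ (a,b], the strict Cauchy inequality (∫_a^x r(t) φ(λ,t) θ(λ,t) dt)² < (∫_a^x r(t) θ(λ,t)² dt)(∫_a^x r(t) φ(λ,t)² dt) holds; in particular, with the variation-of-parameters z-derivatives θ̇, φ̇ (defined from A, B, C as in eq. (14.3.39)), one has W(φ̇(λ,·), θ̇(λ,·))(x) = A(x)² − B(x)C(x) < 0 for x ∈ (a,b]. -/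
open MeasureTheory intervalIntegral Set

/-- `(u, u1)` is a real-valued integrated solution of `-(p u')' + q u = λ r u` on `[a,b]`
with initial values `u(a) = ua`, `u^[1](a) = u1a` (real spectral parameter `lam`). -/
def IsIntegratedSolR (a b : ℝ) (p q r : ℝ → ℝ) (lam : ℝ) (u u1 : ℝ → ℝ)
    (ua u1a : ℝ) : Prop :=
  IntervalIntegrable (fun t => u1 t / p t) volume a b ∧
  IntervalIntegrable (fun t => (q t - lam * r t) * u t) volume a b ∧
  (∀ x ∈ Icc a b, u x = ua + ∫ t in a..x, u1 t / p t) ∧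
  (∀ x ∈ Icc a b, u1 x = u1a + ∫ t in a..x, (q t - lam * r t) * u t)


lemma contPrim {a b : ℝ} (hab : a ≤ b) {f : ℝ → ℝ}
    (hf : IntervalIntegrable f volume a b) :
    ContinuousOn (fun s => ∫ t in a..s, f t) (Icc a b) := by
  have h : IntegrableOn f (uIcc a b) volume := (intervalIntegrable_iff' (f := f) (μ := volume)).mp hf
  have := intervalIntegral.continuousOn_primitive_interval (f := f) (μ := volume) h
  rwa [uIcc_of_le hab] at this

lemma integrable_mul_of_bdd {s : Set ℝ} (hs : MeasurableSet s) {f G : ℝ → ℝ}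
    (hf : IntegrableOn f s) (hG : AEStronglyMeasurable G (volume.restrict s))
    {M : ℝ} (hM : ∀ t ∈ s, |G t| ≤ M) :
    IntegrableOn (fun t => f t * G t) s := by
  apply Integrable.mono' (hf.norm.mul_const M) (hf.aestronglyMeasurable.mul hG)
  filter_upwards [ae_restrict_mem hs] with t ht
  calc ‖f t * G t‖ = |f t| * |G t| := abs_mul _ _
    _ ≤ ‖f t‖ * M := mul_le_mul_of_nonneg_left (hM t ht) (abs_nonneg _)


lemma fubini_parts {a x : ℝ} (hx : a < x) {f g : ℝ → ℝ}
    (hf : IntegrableOn f (Ioo a x)) (hg : IntegrableOn g (Ioo a x)) :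
    (∫ s in Ioo a x, g s) * (∫ t in Ioo a x, f t) =
      (∫ s in Ioo a x, g s * ∫ t in Ioo a s, f t) +
      (∫ t in Ioo a x, (∫ s in Ioc a t, g s) * f t) := by
  set μ := volume.restrict (Ioo a x) with hμ
  have hGF : Integrable (fun z : ℝ × ℝ => g z.1 * f z.2) (μ.prod μ) := hg.mul_prod hf
  set S : Set (ℝ × ℝ) := {z : ℝ × ℝ | z.2 < z.1} with hS
  have hSm : MeasurableSet S := measurableSet_lt measurable_snd measurable_fst
  set K : ℝ × ℝ → ℝ := S.indicator (fun z : ℝ × ℝ => g z.1 * f z.2) with hKdef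
  set K' : ℝ × ℝ → ℝ := Sᶜ.indicator (fun z : ℝ × ℝ => g z.1 * f z.2) with hK'def
  have hK : Integrable K (μ.prod μ) := hGF.indicator hSm
  have hK' : Integrable K' (μ.prod μ) := hGF.indicator hSm.compl
  have hsplit : ∀ z : ℝ × ℝ, g z.1 * f z.2 = K z + K' z := by
    intro z
    rw [hKdef, hK'def]
    exact (congrFun (S.indicator_self_add_compl (fun z : ℝ × ℝ => g z.1 * f z.2)) z).symm
  -- left side as iterated integral
  have hL : (∫ s in Ioo a x, g s) * (∫ t in Ioo a x, f t)
      = ∫ s, (∫ t, K (s, t) ∂μ) + (∫ t, K' (s, t) ∂μ) ∂μ := by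
    have h1 : (∫ s in Ioo a x, g s) * (∫ t in Ioo a x, f t)
        = ∫ s, ∫ t, g s * f t ∂μ ∂μ := by
      rw [← MeasureTheory.integral_mul_const]
      exact MeasureTheory.integral_congr_ae (Filter.Eventually.of_forall fun s => (MeasureTheory.integral_const_mul _ _).symm)
    rw [h1]
    apply MeasureTheory.integral_congr_ae
    filter_upwards [hK.prod_right_ae, hK'.prod_right_ae] with s hs hs'
    rw [← integral_add hs hs']
    exact MeasureTheory.integral_congr_ae (Filter.Eventually.of_forall fun t => hsplit (s, t))
  rw [hL, integral_add hK.integral_prod_left hK'.integral_prod_left]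
  congr 1
  · -- first term : ∫ s, ∫ t, K (s,t)
    apply MeasureTheory.integral_congr_ae
    filter_upwards [ae_restrict_mem measurableSet_Ioo] with s hs
    have heq : (fun t => K (s, t)) = (Iio s).indicator (fun t => g s * f t) := by
      funext t
      by_cases h : t < s
      · rw [hKdef, Set.indicator_of_mem (by exact h : (s, t) ∈ S),
          Set.indicator_of_mem (by exact h)]
      · rw [hKdef, Set.indicator_of_notMem (by exact h : (s, t) ∉ S),
          Set.indicator_of_notMem (by exact h)]
    rw [heq, MeasureTheory.integral_indicator measurableSet_Iio, hμ, Measure.restrict_restrict measurableSet_Iio]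
    have hset : Iio s ∩ Ioo a x = Ioo a s := by
      ext t
      simp only [mem_inter_iff, mem_Iio, mem_Ioo]
      constructor
      · rintro ⟨h1, h2, h3⟩; exact ⟨h2, h1⟩
      · rintro ⟨h1, h2⟩; exact ⟨h2, h1, h2.trans hs.2⟩
    rw [hset, MeasureTheory.integral_const_mul]
  · -- second term : swap then compute
    have hswap := integral_integral_swap (f := fun s t => K' (s, t)) (μ := μ) (ν := μ) ?_
    · rw [hswap]
      apply MeasureTheory.integral_congr_ae
      filter_upwards [ae_restrict_mem measurableSet_Ioo] with t ht
      have heq : (fun s => K' (s, t)) = (Iic t).indicator (fun s => g s * f t) := by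
        funext s
        by_cases h : s ≤ t
        · rw [hK'def, Set.indicator_of_mem (by simpa [hS] using h : (s, t) ∈ Sᶜ),
            Set.indicator_of_mem (by exact h)]
        · rw [hK'def, Set.indicator_of_notMem (by simpa [hS] using h : (s, t) ∉ Sᶜ),
            Set.indicator_of_notMem (by exact h)]
      rw [heq, MeasureTheory.integral_indicator measurableSet_Iic, hμ,
        Measure.restrict_restrict measurableSet_Iic]
      have hset : Iic t ∩ Ioo a x = Ioc a t := by
        ext s
        simp only [mem_inter_iff, mem_Iic, mem_Ioc, mem_Ioo]
        constructor
        · rintro ⟨h1, h2, h3⟩; exact ⟨h2, h1⟩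
        · rintro ⟨h1, h2⟩; exact ⟨h2, h1, lt_of_le_of_lt h2 ht.2⟩
      rw [hset, MeasureTheory.integral_mul_const]
    · exact hK'

lemma prim_bdd_props {a b x : ℝ} (hax : a < x) (hxb : x ≤ b) {f : ℝ → ℝ}
    (hf : IntervalIntegrable f volume a b) {F : ℝ → ℝ} {c : ℝ}
    (hF : ∀ s ∈ Icc a b, F s = c + ∫ t in a..s, f t) :
    AEStronglyMeasurable F (volume.restrict (Ioo a x)) ∧
    ∃ M : ℝ, ∀ s ∈ Icc a b, ‖F s‖ ≤ M := by
  have hab : a ≤ b := hax.le.trans hxb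
  have hsub : Ioo a x ⊆ Icc a b := fun t ht => ⟨ht.1.le, ht.2.le.trans hxb⟩
  have hFc : ContinuousOn F (Icc a b) :=
    (continuousOn_const.add (contPrim hab hf)).congr hF
  refine ⟨(hFc.aestronglyMeasurable measurableSet_Icc).mono_measure
    (Measure.restrict_mono hsub le_rfl), isCompact_Icc.exists_bound_of_continuousOn hFc⟩

lemma integrableOn_of_intervalIntegrable {a b x : ℝ} (hax : a < x) (hxb : x ≤ b)
    {f : ℝ → ℝ} (hf : IntervalIntegrable f volume a b) : IntegrableOn f (Ioo a x) := by
  have hab : a ≤ b := hax.le.trans hxb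
  refine ((intervalIntegrable_iff' (f := f) (μ := volume)).mp hf).mono_set ?_
  rw [uIcc_of_le hab]
  exact fun t ht => ⟨ht.1.le, ht.2.le.trans hxb⟩

lemma intOn_mul_right {a b x : ℝ} (hax : a < x) (hxb : x ≤ b) {f : ℝ → ℝ}
    (hfI : IntegrableOn f (Ioo a x)) {G : ℝ → ℝ} {g : ℝ → ℝ} {d : ℝ}
    (hg : IntervalIntegrable g volume a b)
    (hG : ∀ s ∈ Icc a b, G s = d + ∫ t in a..s, g t) :
    IntegrableOn (fun t => f t * G t) (Ioo a x) := by
  obtain ⟨hGm, M, hM⟩ := prim_bdd_props hax hxb hg hG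
  exact integrable_mul_of_bdd measurableSet_Ioo hfI hGm
    (fun t ht => hM t ⟨ht.1.le, ht.2.le.trans hxb⟩)

lemma prod_rule {a b x : ℝ} (hax : a < x) (hxb : x ≤ b) {f g F G : ℝ → ℝ} {c d : ℝ}
    (hf : IntervalIntegrable f volume a b) (hg : IntervalIntegrable g volume a b)
    (hF : ∀ s ∈ Icc a b, F s = c + ∫ t in a..s, f t)
    (hG : ∀ s ∈ Icc a b, G s = d + ∫ t in a..s, g t) :
    IntegrableOn (fun t => f t * G t) (Ioo a x) ∧
    IntegrableOn (fun t => F t * g t) (Ioo a x) ∧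
    F x * G x = c * d + ((∫ t in Ioo a x, f t * G t) + (∫ t in Ioo a x, F t * g t)) := by
  have hab : a ≤ b := hax.le.trans hxb
  have hsub : Ioo a x ⊆ Icc a b := fun t ht => ⟨ht.1.le, ht.2.le.trans hxb⟩
  have hxm : x ∈ Icc a b := ⟨hax.le, hxb⟩
  have hfI : IntegrableOn f (Ioo a x) := integrableOn_of_intervalIntegrable hax hxb hf
  have hgI : IntegrableOn g (Ioo a x) := integrableOn_of_intervalIntegrable hax hxb hg
  have int1 : IntegrableOn (fun t => f t * G t) (Ioo a x) := intOn_mul_right hax hxb hfI hg hG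
  have int2' : IntegrableOn (fun t => g t * F t) (Ioo a x) := intOn_mul_right hax hxb hgI hf hF
  have int2 : IntegrableOn (fun t => F t * g t) (Ioo a x) :=
    int2'.congr_fun (fun t _ => mul_comm _ _) measurableSet_Ioo
  refine ⟨int1, int2, ?_⟩
  -- integrability of the primitive-product pieces
  have intQf : IntegrableOn (fun t => f t * (∫ s in Ioc a t, g s)) (Ioo a x) := by
    have h0 : IntegrableOn (fun t => f t * ((fun u => 0 + ∫ s in a..u, g s) t)) (Ioo a x) :=
      intOn_mul_right (d := (0:ℝ)) hax hxb hfI hg (fun s _ => rfl)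
    refine h0.congr_fun (fun t ht => ?_) measurableSet_Ioo
    simp [intervalIntegral.integral_of_le ht.1.le]
  have intPg : IntegrableOn (fun t => g t * (∫ s in Ioo a t, f s)) (Ioo a x) := by
    have h0 : IntegrableOn (fun t => g t * ((fun u => 0 + ∫ s in a..u, f s) t)) (Ioo a x) :=
      intOn_mul_right (d := (0:ℝ)) hax hxb hgI hf (fun s _ => rfl)
    refine h0.congr_fun (fun t ht => ?_) measurableSet_Ioo
    simp [intervalIntegral.integral_of_le ht.1.le, integral_Ioc_eq_integral_Ioo]
  -- expand the two integrals
  have e1 : ∫ t in Ioo a x, f t * G t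
      = d * (∫ t in Ioo a x, f t) + ∫ t in Ioo a x, f t * (∫ s in Ioc a t, g s) := by
    rw [← MeasureTheory.integral_const_mul, ← MeasureTheory.integral_add (hfI.const_mul d) intQf]
    refine setIntegral_congr_fun measurableSet_Ioo (fun t ht => ?_)
    have : G t = d + ∫ s in Ioc a t, g s := by
      rw [hG t (hsub ht), intervalIntegral.integral_of_le ht.1.le]
    rw [this]; ring
  have e2 : ∫ t in Ioo a x, F t * g t
      = c * (∫ t in Ioo a x, g t) + ∫ t in Ioo a x, g t * (∫ s in Ioo a t, f s) := by
    rw [← MeasureTheory.integral_const_mul, ← MeasureTheory.integral_add (hgI.const_mul c) intPg]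
    refine setIntegral_congr_fun measurableSet_Ioo (fun t ht => ?_)
    have : F t = c + ∫ s in Ioo a t, f s := by
      rw [hF t (hsub ht), intervalIntegral.integral_of_le ht.1.le, integral_Ioc_eq_integral_Ioo]
    rw [this]; ring
  have hfub := fubini_parts hax hfI hgI
  have hFx : F x = c + ∫ t in Ioo a x, f t := by
    rw [hF x hxm, intervalIntegral.integral_of_le hax.le, integral_Ioc_eq_integral_Ioo]
  have hGx : G x = d + ∫ t in Ioo a x, g t := by
    rw [hG x hxm, intervalIntegral.integral_of_le hax.le, integral_Ioc_eq_integral_Ioo]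
  rw [hFx, hGx, e1, e2]
  have hcomm : (∫ t in Ioo a x, f t * (∫ s in Ioc a t, g s))
      = ∫ t in Ioo a x, (∫ s in Ioc a t, g s) * f t :=
    setIntegral_congr_fun measurableSet_Ioo (fun t _ => mul_comm _ _)
  rw [hcomm]
  linear_combination hfub

lemma vol_ne {c d : ℝ} (hcd : c < d) : (ae (volume.restrict (Ioo c d))).NeBot := by
  refine ae_neBot.mpr ?_
  rw [Ne, Measure.restrict_eq_zero, Real.volume_Ioo, ENNReal.ofReal_eq_zero]
  push_neg; linarith

lemma vanish {a b x : ℝ} (hax : a < x) (hxb : x ≤ b) {p q r : ℝ → ℝ}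
    (hp : ∀ᵐ t ∂(volume.restrict (Ioo a b)), 0 < p t)
    (hpint : IntegrableOn (fun t => 1 / p t) (Ioo a b)) {lam : ℝ}
    {u u1 : ℝ → ℝ} {ua u1a : ℝ}
    (hu : IsIntegratedSolR a b p q r lam u u1 ua u1a)
    (h0 : ∀ᵐ t ∂(volume.restrict (Ioo a x)), u t = 0) :
    ua = 0 ∧ u1a = 0 := by
  obtain ⟨hint1, hint2, hueq, hu1eq⟩ := hu
  have hab : a ≤ b := hax.le.trans hxb
  have hsub : Ioo a x ⊆ Icc a b := fun t ht => ⟨ht.1.le, ht.2.le.trans hxb⟩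
  -- u1 is constant equal to u1a on Ioc a x
  have hu1c : ∀ s ∈ Ioc a x, u1 s = u1a := by
    intro s hs
    have hsm : s ∈ Icc a b := ⟨hs.1.le, hs.2.trans hxb⟩
    rw [hu1eq s hsm]
    have hz : ∀ᵐ t ∂(volume.restrict (Ioo a s)), (q t - lam * r t) * u t = 0 := by
      have h0' : ∀ᵐ t ∂(volume.restrict (Ioo a s)), u t = 0 :=
        ae_restrict_of_ae_restrict_of_subset (Ioo_subset_Ioo_right hs.2) h0
      filter_upwards [h0'] with t ht; rw [ht, mul_zero]
    rw [intervalIntegral.integral_of_le hs.1.le, integral_Ioc_eq_integral_Ioo,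
      MeasureTheory.integral_eq_zero_of_ae hz, add_zero]
  -- J s = u1a * ∫_{Ioo a s} 1/p
  have hJ : ∀ s ∈ Ioc a x, (∫ t in a..s, u1 t / p t) = u1a * ∫ t in Ioo a s, 1 / p t := by
    intro s hs
    rw [intervalIntegral.integral_of_le hs.1.le, integral_Ioc_eq_integral_Ioo,
      ← MeasureTheory.integral_const_mul]
    refine setIntegral_congr_fun measurableSet_Ioo (fun t ht => ?_)
    rw [hu1c t ⟨ht.1, (ht.2.trans_le hs.2).le⟩]
    ring
  have key : ∀ᵐ s ∂(volume.restrict (Ioo a x)),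
      ua + u1a * (∫ t in Ioo a s, 1 / p t) = 0 := by
    filter_upwards [h0, ae_restrict_mem measurableSet_Ioo] with s hs hsm
    have h1 := hueq s (hsub hsm)
    rw [hs] at h1
    rw [← hJ s ⟨hsm.1, hsm.2.le⟩]
    linarith
  set m := (a + x) / 2 with hm
  have ham : a < m := by rw [hm]; linarith
  have hmx : m < x := by rw [hm]; linarith
  have key1 := ae_restrict_of_ae_restrict_of_subset (Ioo_subset_Ioo_right hmx.le) key
  have key2 := ae_restrict_of_ae_restrict_of_subset (Ioo_subset_Ioo_left ham.le) key
  haveI := vol_ne ham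
  haveI := vol_ne hmx
  obtain ⟨s₁, hs₁, hs₁m⟩ := (key1.and (ae_restrict_mem measurableSet_Ioo)).exists
  obtain ⟨s₂, hs₂, hs₂m⟩ := (key2.and (ae_restrict_mem measurableSet_Ioo)).exists
  have h12 : s₁ < s₂ := hs₁m.2.trans hs₂m.1
  have hs₁x : s₁ ∈ Ioc a x := ⟨hs₁m.1, (hs₁m.2.trans hmx).le⟩
  have hs₂x : s₂ ∈ Ioc a x := ⟨ham.trans hs₂m.1, hs₂m.2.le⟩
  have hsub12 : Ioo s₁ s₂ ⊆ Ioo a b :=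
    fun t ht => ⟨hs₁x.1.trans ht.1, (ht.2.trans hs₂m.2).trans_le hxb⟩
  -- difference of the primitives
  have hiv : ∀ s ∈ Ioc a x, (∫ t in Ioo a s, 1 / p t) = ∫ t in a..s, 1 / p t := by
    intro s hs
    rw [intervalIntegral.integral_of_le hs.1.le, integral_Ioc_eq_integral_Ioo]
  have hivint : ∀ s ∈ Ioo a x, IntervalIntegrable (fun t => 1 / p t) volume a s := by
    intro s hs
    rw [intervalIntegrable_iff, uIoc_of_le hs.1.le]
    exact hpint.mono_set (fun t ht => ⟨ht.1, lt_of_le_of_lt ht.2 (hs.2.trans_le hxb)⟩)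
  have hI21 : (∫ t in Ioo a s₂, 1 / p t) - (∫ t in Ioo a s₁, 1 / p t)
      = ∫ t in Ioo s₁ s₂, 1 / p t := by
    rw [hiv s₁ hs₁x, hiv s₂ hs₂x,
      intervalIntegral.integral_interval_sub_left (hivint s₂ ⟨ham.trans hs₂m.1, hs₂m.2⟩) (hivint s₁ ⟨hs₁m.1, hs₁m.2.trans hmx⟩),
      intervalIntegral.integral_of_le h12.le, integral_Ioc_eq_integral_Ioo]
  have hII : u1a * (∫ t in Ioo s₁ s₂, 1 / p t) = 0 := by
    linear_combination hs₂ - hs₁ - u1a * hI21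
  have hIpos : 0 < ∫ t in Ioo s₁ s₂, 1 / p t := by
    have hp' : ∀ᵐ t ∂(volume.restrict (Ioo s₁ s₂)), 0 < 1 / p t := by
      filter_upwards [ae_restrict_of_ae_restrict_of_subset hsub12 hp] with t ht
      positivity
    have hint : IntegrableOn (fun t => 1 / p t) (Ioo s₁ s₂) := hpint.mono_set hsub12
    rcases (setIntegral_nonneg_of_ae_restrict (hp'.mono fun t ht => ht.le)).lt_or_eq
      with h | h
    · exact h
    · exfalso
      have hz := (MeasureTheory.integral_eq_zero_iff_of_nonneg_ae
        (hp'.mono fun t ht => ht.le) hint).mp h.symm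
      haveI := vol_ne h12
      obtain ⟨t, ht1, ht2⟩ := (hp'.and hz).exists
      rw [Pi.zero_apply] at ht2
      exact absurd ht2 (ne_of_gt ht1)
  have hu1a : u1a = 0 := by
    rcases mul_eq_zero.mp hII with h | h
    · exact h
    · exact absurd h (ne_of_gt hIpos)
  refine ⟨?_, hu1a⟩
  rw [hu1a] at hs₁
  simpa using hs₁

lemma sol_comb {a b : ℝ} {p q r : ℝ → ℝ} {lam : ℝ} {θ θ1 φ φ1 : ℝ → ℝ} {c1 d1 c2 d2 : ℝ}
    (hθ : IsIntegratedSolR a b p q r lam θ θ1 c1 d1)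
    (hφ : IsIntegratedSolR a b p q r lam φ φ1 c2 d2) (α β : ℝ) :
    IsIntegratedSolR a b p q r lam (fun t => α * θ t + β * φ t)
      (fun t => α * θ1 t + β * φ1 t) (α * c1 + β * c2) (α * d1 + β * d2) := by
  obtain ⟨hθ1, hθ2, hθ3, hθ4⟩ := hθ
  obtain ⟨hφ1, hφ2, hφ3, hφ4⟩ := hφ
  have e1 : (fun t => (α * θ1 t + β * φ1 t) / p t)
      = fun t => α * (θ1 t / p t) + β * (φ1 t / p t) := funext fun t => by ring
  have e2 : (fun t => (q t - lam * r t) * (α * θ t + β * φ t))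
      = fun t => α * ((q t - lam * r t) * θ t) + β * ((q t - lam * r t) * φ t) :=
    funext fun t => by ring
  refine ⟨?_, ?_, ?_, ?_⟩
  · rw [e1]; exact (hθ1.const_mul α).add (hφ1.const_mul β)
  · rw [e2]; exact (hθ2.const_mul α).add (hφ2.const_mul β)
  · intro s hs
    have hsI : uIcc a s ⊆ uIcc a b := by
      rw [uIcc_of_le hs.1, uIcc_of_le (hs.1.trans hs.2)]
      exact Icc_subset_Icc le_rfl hs.2
    simp only [e1]
    rw [intervalIntegral.integral_add ((hθ1.mono_set hsI).const_mul α)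
      ((hφ1.mono_set hsI).const_mul β), intervalIntegral.integral_const_mul,
      intervalIntegral.integral_const_mul, hθ3 s hs, hφ3 s hs]
    ring
  · intro s hs
    have hsI : uIcc a s ⊆ uIcc a b := by
      rw [uIcc_of_le hs.1, uIcc_of_le (hs.1.trans hs.2)]
      exact Icc_subset_Icc le_rfl hs.2
    simp only [e2]
    rw [intervalIntegral.integral_add ((hθ2.mono_set hsI).const_mul α)
      ((hφ2.mono_set hsI).const_mul β), intervalIntegral.integral_const_mul,
      intervalIntegral.integral_const_mul, hθ4 s hs, hφ4 s hs]
    ring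

lemma ae_zero_of_int_zero {a x : ℝ} {r h : ℝ → ℝ}
    (hr : ∀ᵐ t ∂(volume.restrict (Ioo a x)), 0 < r t)
    (hint : IntegrableOn (fun t => r t * h t ^ 2) (Ioo a x))
    (hzero : (∫ t in Ioo a x, r t * h t ^ 2) = 0) :
    ∀ᵐ t ∂(volume.restrict (Ioo a x)), h t = 0 := by
  have hnn : 0 ≤ᵐ[volume.restrict (Ioo a x)] fun t => r t * h t ^ 2 := by
    filter_upwards [hr] with t ht; positivity
  have hz := (MeasureTheory.integral_eq_zero_iff_of_nonneg_ae hnn hint).mp hzero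
  filter_upwards [hr, hz] with t ht h2
  have h2' : r t * h t ^ 2 = 0 := h2
  rcases mul_eq_zero.mp h2' with h' | h'
  · exact absurd h' (ne_of_gt ht)
  · exact pow_eq_zero_iff two_ne_zero |>.mp h'

theorem statement3 (a b : ℝ) (hab : a < b) (p q r : ℝ → ℝ)
    (hpqr : Hyp31 a b p q r) (lam : ℝ)
    (θ θ1 φ φ1 : ℝ → ℝ)
    (hθ : IsIntegratedSolR a b p q r lam θ θ1 1 0)
    (hφ : IsIntegratedSolR a b p q r lam φ φ1 0 1)
    (A B C θd θd1 φd φd1 : ℝ → ℝ)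
    (hA : ∀ x, A x = ∫ t in a..x, r t * φ t * θ t)
    (hB : ∀ x, B x = ∫ t in a..x, r t * θ t ^ 2)
    (hC : ∀ x, C x = ∫ t in a..x, r t * φ t ^ 2)
    (hθd : ∀ x, θd x = θ x * A x - φ x * B x)
    (hθd1 : ∀ x, θd1 x = θ1 x * A x - φ1 x * B x)
    (hφd : ∀ x, φd x = θ x * C x - φ x * A x)
    (hφd1 : ∀ x, φd1 x = θ1 x * C x - φ1 x * A x) :
    ∀ x ∈ Ioc a b,
      A x ^ 2 < B x * C x ∧
      φd x * θd1 x - φd1 x * θd x = A x ^ 2 - B x * C x ∧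
      φd x * θd1 x - φd1 x * θd x < 0 := by
  obtain ⟨hrpos, hrint, hppos, hpint, hqint⟩ := hpqr
  intro x hx
  obtain ⟨hax, hxb⟩ := hx
  have hsub : Ioo a x ⊆ Icc a b := fun t ht => ⟨ht.1.le, ht.2.le.trans hxb⟩
  have hrpos_x : ∀ᵐ t ∂(volume.restrict (Ioo a x)), 0 < r t :=
    ae_restrict_of_ae_restrict_of_subset (Ioo_subset_Ioo_right hxb) hrpos
  have hrx : IntegrableOn r (Ioo a x) := hrint.mono_set (Ioo_subset_Ioo_right hxb)
  -- measurability and bounds for θ and φ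
  obtain ⟨θm, Mθ, hMθ⟩ := prim_bdd_props hax hxb hθ.1 hθ.2.2.1
  obtain ⟨φm, Mφ, hMφ⟩ := prim_bdd_props hax hxb hφ.1 hφ.2.2.1
  have hMθ' : ∀ t ∈ Ioo a x, |θ t| ≤ Mθ := fun t ht => by
    rw [← Real.norm_eq_abs]; exact hMθ t (hsub ht)
  have hMφ' : ∀ t ∈ Ioo a x, |φ t| ≤ Mφ := fun t ht => by
    rw [← Real.norm_eq_abs]; exact hMφ t (hsub ht)
  -- integrability of products
  have hrθ : IntegrableOn (fun t => r t * θ t) (Ioo a x) :=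
    integrable_mul_of_bdd measurableSet_Ioo hrx θm hMθ'
  have hrφ : IntegrableOn (fun t => r t * φ t) (Ioo a x) :=
    integrable_mul_of_bdd measurableSet_Ioo hrx φm hMφ'
  have hAint : IntegrableOn (fun t => r t * φ t * θ t) (Ioo a x) :=
    integrable_mul_of_bdd measurableSet_Ioo hrφ θm hMθ'
  have hBint : IntegrableOn (fun t => r t * θ t ^ 2) (Ioo a x) :=
    MeasureTheory.IntegrableOn.congr_fun (integrable_mul_of_bdd measurableSet_Ioo hrθ θm hMθ')
      (fun t _ => by ring) measurableSet_Ioo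
  have hCint : IntegrableOn (fun t => r t * φ t ^ 2) (Ioo a x) :=
    MeasureTheory.IntegrableOn.congr_fun (integrable_mul_of_bdd measurableSet_Ioo hrφ φm hMφ')
      (fun t _ => by ring) measurableSet_Ioo
  -- set-integral versions of A, B, C
  have hAx : A x = ∫ t in Ioo a x, r t * φ t * θ t := by
    rw [hA, intervalIntegral.integral_of_le hax.le, integral_Ioc_eq_integral_Ioo]
  have hBx : B x = ∫ t in Ioo a x, r t * θ t ^ 2 := by
    rw [hB, intervalIntegral.integral_of_le hax.le, integral_Ioc_eq_integral_Ioo]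
  have hCx : C x = ∫ t in Ioo a x, r t * φ t ^ 2 := by
    rw [hC, intervalIntegral.integral_of_le hax.le, integral_Ioc_eq_integral_Ioo]
  -- B x > 0
  have hBpos : 0 < B x := by
    have hBnn : 0 ≤ B x := by
      rw [hBx]
      refine setIntegral_nonneg_of_ae_restrict ?_
      filter_upwards [hrpos_x] with t ht; positivity
    rcases hBnn.lt_or_eq with h | h
    · exact h
    · exfalso
      have hθ0 : ∀ᵐ t ∂(volume.restrict (Ioo a x)), θ t = 0 :=
        ae_zero_of_int_zero hrpos_x hBint (by rw [← hBx]; exact h.symm)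
      have := (vanish hax hxb hppos hpint hθ hθ0).1
      exact one_ne_zero this
  -- strict Cauchy-Schwarz
  have hACB : A x ^ 2 < B x * C x := by
    by_contra hcon
    push_neg at hcon
    set t₀ := A x / B x with ht₀def
    have ht₀ : t₀ * B x = A x := div_mul_cancel₀ _ (ne_of_gt hBpos)
    have hf1 : IntegrableOn
        (fun t => t₀ ^ 2 * (r t * θ t ^ 2) - 2 * t₀ * (r t * φ t * θ t)) (Ioo a x) :=
      (hBint.const_mul (t₀ ^ 2)).sub (hAint.const_mul (2 * t₀))
    have hQint : IntegrableOn (fun t => r t * (t₀ * θ t - φ t) ^ 2) (Ioo a x) :=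
      MeasureTheory.IntegrableOn.congr_fun (hf1.add hCint)
        (fun t _ => by simp only [Pi.add_apply]; ring) measurableSet_Ioo
    have hexp : (∫ t in Ioo a x, r t * (t₀ * θ t - φ t) ^ 2)
        = t₀ ^ 2 * B x - 2 * t₀ * A x + C x := by
      have h1 : (∫ t in Ioo a x, r t * (t₀ * θ t - φ t) ^ 2)
          = ∫ t in Ioo a x,
              ((t₀ ^ 2 * (r t * θ t ^ 2) - 2 * t₀ * (r t * φ t * θ t)) + r t * φ t ^ 2) :=
        setIntegral_congr_fun measurableSet_Ioo (fun t _ => by ring)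
      have hb' : IntegrableOn (fun t => t₀ ^ 2 * (r t * θ t ^ 2)) (Ioo a x) :=
        hBint.const_mul (t₀ ^ 2)
      have ha' : IntegrableOn (fun t => 2 * t₀ * (r t * φ t * θ t)) (Ioo a x) :=
        hAint.const_mul (2 * t₀)
      rw [h1, MeasureTheory.integral_add hf1 hCint,
        MeasureTheory.integral_sub hb' ha',
        MeasureTheory.integral_const_mul, MeasureTheory.integral_const_mul,
        ← hAx, ← hBx, ← hCx]
    have hQnn : 0 ≤ ∫ t in Ioo a x, r t * (t₀ * θ t - φ t) ^ 2 := by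
      refine setIntegral_nonneg_of_ae_restrict ?_
      filter_upwards [hrpos_x] with t ht; positivity
    have hQle : (∫ t in Ioo a x, r t * (t₀ * θ t - φ t) ^ 2) ≤ 0 := by
      rw [hexp]
      nlinarith [ht₀, hcon, hBpos]
    have hQ0 : (∫ t in Ioo a x, r t * (t₀ * θ t - φ t) ^ 2) = 0 :=
      le_antisymm hQle hQnn
    have hae := ae_zero_of_int_zero hrpos_x hQint hQ0
    have husol := sol_comb hθ hφ t₀ (-1)
    have h0 : ∀ᵐ t ∂(volume.restrict (Ioo a x)), t₀ * θ t + (-1) * φ t = 0 := by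
      filter_upwards [hae] with t ht; linarith
    have hfin := (vanish hax hxb hppos hpint husol h0).2
    norm_num at hfin
  -- Wronskian equals 1 at x
  have w1 := prod_rule hax hxb hθ.1 hφ.2.1 hθ.2.2.1 hφ.2.2.2
  have w2 := prod_rule hax hxb hφ.1 hθ.2.1 hφ.2.2.1 hθ.2.2.2
  have d1 : (∫ t in Ioo a x, (θ1 t / p t) * φ1 t)
      = ∫ t in Ioo a x, (φ1 t / p t) * θ1 t :=
    setIntegral_congr_fun measurableSet_Ioo (fun t _ => by ring)
  have d2 : (∫ t in Ioo a x, θ t * ((q t - lam * r t) * φ t))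
      = ∫ t in Ioo a x, φ t * ((q t - lam * r t) * θ t) :=
    setIntegral_congr_fun measurableSet_Ioo (fun t _ => by ring)
  have hw : θ x * φ1 x - φ x * θ1 x = 1 := by
    have e1 := w1.2.2
    have e2 := w2.2.2
    rw [d1, d2] at e1
    linarith
  have hid : φd x * θd1 x - φd1 x * θd x = A x ^ 2 - B x * C x := by
    rw [hφd, hθd1, hφd1, hθd]
    linear_combination (A x ^ 2 - B x * C x) * hw
  exact ⟨hACB, hid, by rw [hid]; linarith⟩
end

section
/- Assume the integrated solutions with the standard initial values exist for z = 0 and for a given z ∈ ℂ. Let R_K be the 2×2 matrix with entries (R_K)₁₁ = θ(0,b), (R_K)₁₂ = φ(0,b), (R_K)₂₁ = θ^{[1]}(0,b), (R_K)₂₂ = φ^{[1]}(0,b). For a pair (g, g^{[1]}) define V₁(g) = g(b) − (R_K)₁₁ g(a) − (R_K)₁₂ g^{[1]}(a) and V₂(g) = g^{[1]}(b) − (R_K)₂₁ g(a) − (R_K)₂₂ g^{[1]}(a), and set F_K(z) = V₁(θ(z,·)) V₂(φ(z,·)) − V₂(θ(z,·)) V₁(φ(z,·)). Then F_K(z) =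 −2 (D_K(z) − 1), where D_K(z) = ½[φ^{[1]}(0,b)θ(z,b) + θ(0,b)φ^{[1]}(z,b) − φ(0,b)θ^{[1]}(z,b) − θ^{[1]}(0,b)φ(z,b)]. -/
open MeasureTheory intervalIntegral Set

/-- Fubini over the triangle: product of integrals splits into the two triangle pieces. -/
lemma fubini_triangle (a b : ℝ) (f g : ℝ → ℂ)
    (hf : IntegrableOn f (Ioc a b)) (hg : IntegrableOn g (Ioc a b)) :
    (∫ x in Ioc a b, f x) * (∫ x in Ioc a b, g x)
      = (∫ x in Ioc a b, f x * ∫ t in Ioc a x, g t)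
        + ∫ x in Ioc a b, (∫ t in Ioc a x, f t) * g x := by
  set μ := volume.restrict (Ioc a b) with hμ
  have hH : Integrable (fun z : ℝ × ℝ => f z.1 * g z.2) (μ.prod μ) := hf.mul_prod hg
  set S : Set (ℝ × ℝ) := {z : ℝ × ℝ | z.2 ≤ z.1} with hSdef
  have hS : MeasurableSet S := measurableSet_le measurable_snd measurable_fst
  have hsplit : (∫ x in Ioc a b, f x) * (∫ x in Ioc a b, g x)
      = (∫ z, S.indicator (fun z : ℝ × ℝ => f z.1 * g z.2) z ∂(μ.prod μ))
        + ∫ z, Sᶜ.indicator (fun z : ℝ × ℝ => f z.1 * g z.2) z ∂(μ.prod μ) := by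
    rw [← integral_add (hH.indicator hS) (hH.indicator hS.compl)]
    rw [← integral_prod_mul f g]
    congr 1
    funext zz
    by_cases h : zz ∈ S <;> simp [indicator, h]
  rw [hsplit]
  congr 1
  · rw [integral_prod _ (hH.indicator hS)]
    refine setIntegral_congr_fun measurableSet_Ioc (fun x hx => ?_)
    have : ∀ y, S.indicator (fun z : ℝ × ℝ => f z.1 * g z.2) (x, y)
        = (Iic x).indicator (fun y => f x * g y) y := by
      intro y
      by_cases h : y ≤ x <;> simp [indicator, hSdef, h]
    simp_rw [this]
    rw [MeasureTheory.integral_indicator measurableSet_Iic, hμ, Measure.restrict_restrict measurableSet_Iic]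
    have hset : Iic x ∩ Ioc a b = Ioc a x := by
      ext t; simp only [mem_inter_iff, mem_Iic, mem_Ioc, mem_Ioc] at *
      constructor
      · rintro ⟨h1, h2, h3⟩; exact ⟨h2, h1⟩
      · rintro ⟨h1, h2⟩; exact ⟨h2, h1, h2.trans hx.2⟩
    rw [hset, MeasureTheory.integral_const_mul]
  · rw [integral_prod_symm _ (hH.indicator hS.compl)]
    refine setIntegral_congr_fun measurableSet_Ioc (fun y hy => ?_)
    have : ∀ x, Sᶜ.indicator (fun z : ℝ × ℝ => f z.1 * g z.2) (x, y)
        = (Iio y).indicator (fun x => f x * g y) x := by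
      intro x
      by_cases h : x < y
      · simp [indicator, hSdef, h, not_le.2 h]
      · simp [indicator, hSdef, h, not_lt.1 h]
    simp_rw [this]
    rw [MeasureTheory.integral_indicator measurableSet_Iio, hμ, Measure.restrict_restrict measurableSet_Iio]
    have hset : Iio y ∩ Ioc a b = Ioo a y := by
      ext t; simp only [mem_inter_iff, mem_Iio, mem_Ioc, mem_Ioo] at *
      constructor
      · rintro ⟨h1, h2, h3⟩; exact ⟨h2, h1⟩
      · rintro ⟨h1, h2⟩; exact ⟨h2, h1, (le_of_lt h2).trans hy.2⟩
    rw [hset, ← MeasureTheory.integral_Ioc_eq_integral_Ioo, MeasureTheory.integral_mul_const]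

/-- Integration by parts for primitives of integrable functions. -/
lemma parts_primitive (a b : ℝ) (hab : a ≤ b) (f g : ℝ → ℂ) (c d : ℂ) (F G : ℝ → ℂ)
    (hf : IntegrableOn f (Ioc a b)) (hg : IntegrableOn g (Ioc a b))
    (hF : ∀ x ∈ Icc a b, F x = c + ∫ t in Ioc a x, f t)
    (hG : ∀ x ∈ Icc a b, G x = d + ∫ t in Ioc a x, g t) :
    F b * G b - c * d = ∫ x in Ioc a b, (f x * G x + g x * F x) := by
  have hb : b ∈ Icc a b := ⟨hab, le_refl b⟩
  have hGc : ContinuousOn (fun x => ∫ t in Ioc a x, g t) (Icc a b) :=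
    continuousOn_primitive ((integrableOn_Icc_iff_integrableOn_Ioc enorm_ne_top).2 hg)
  have hFc : ContinuousOn (fun x => ∫ t in Ioc a x, f t) (Icc a b) :=
    continuousOn_primitive ((integrableOn_Icc_iff_integrableOn_Ioc enorm_ne_top).2 hf)
  have h1 : IntegrableOn (fun x => f x * ∫ t in Ioc a x, g t) (Ioc a b) := by
    refine (((integrableOn_Icc_iff_integrableOn_Ioc enorm_ne_top).2 hf).mul_continuousOn hGc
      isCompact_Icc).mono_set Ioc_subset_Icc_self
  have h2 : IntegrableOn (fun x => (∫ t in Ioc a x, f t) * g x) (Ioc a b) := by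
    refine (IntegrableOn.continuousOn_mul hFc
      ((integrableOn_Icc_iff_integrableOn_Ioc enorm_ne_top).2 hg) isCompact_Icc).mono_set Ioc_subset_Icc_self
  have key := fubini_triangle a b f g hf hg
  have hcong : ∫ x in Ioc a b, (f x * G x + g x * F x)
      = ∫ x in Ioc a b, (f x * (d + ∫ t in Ioc a x, g t) + g x * (c + ∫ t in Ioc a x, f t)) := by
    refine setIntegral_congr_fun measurableSet_Ioc (fun x hx => ?_)
    rw [hF x (Ioc_subset_Icc_self hx), hG x (Ioc_subset_Icc_self hx)]
  rw [hcong, hF b hb, hG b hb]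
  symm
  have hA : Integrable (fun x => f x * d + f x * ∫ t in Ioc a x, g t)
      (volume.restrict (Ioc a b)) := (hf.mul_const d).add h1
  have hB : Integrable (fun x => g x * c + (∫ t in Ioc a x, f t) * g x)
      (volume.restrict (Ioc a b)) := (hg.mul_const c).add h2
  calc ∫ x in Ioc a b, (f x * (d + ∫ t in Ioc a x, g t) + g x * (c + ∫ t in Ioc a x, f t))
      = ∫ x in Ioc a b, ((f x * d + f x * ∫ t in Ioc a x, g t)
          + (g x * c + (∫ t in Ioc a x, f t) * g x)) := by
        refine setIntegral_congr_fun measurableSet_Ioc (fun x hx => ?_); ring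
    _ = (∫ x in Ioc a b, (f x * d + f x * ∫ t in Ioc a x, g t))
          + ∫ x in Ioc a b, (g x * c + (∫ t in Ioc a x, f t) * g x) := integral_add hA hB
    _ = ((∫ x in Ioc a b, f x * d) + ∫ x in Ioc a b, f x * ∫ t in Ioc a x, g t)
          + ((∫ x in Ioc a b, g x * c) + ∫ x in Ioc a b, (∫ t in Ioc a x, f t) * g x) := by
        rw [integral_add (hf.mul_const d) h1, integral_add (hg.mul_const c) h2]
    _ = (c + ∫ t in Ioc a b, f t) * (d + ∫ t in Ioc a b, g t) - c * d := by
        rw [MeasureTheory.integral_mul_const, MeasureTheory.integral_mul_const]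
        linear_combination -key
  
/-- The Wronskian of the two standard solutions equals 1 at `b`. -/
lemma wronskian_one (a b : ℝ) (hab : a ≤ b) (p q r : ℝ → ℝ) (z : ℂ) (u u1 v v1 : ℝ → ℂ)
    (hu : IsIntegratedSol a b p q r z u u1 1 0)
    (hv : IsIntegratedSol a b p q r z v v1 0 1) :
    u b * v1 b - u1 b * v b = 1 := by
  obtain ⟨hu1i, hu2i, huF, hu1F⟩ := hu
  obtain ⟨hv1i, hv2i, hvF, hv1F⟩ := hv
  have hf1 : IntegrableOn (fun t => u1 t / (p t : ℂ)) (Ioc a b) :=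
    (intervalIntegrable_iff_integrableOn_Ioc_of_le hab).1 hu1i
  have hf2 : IntegrableOn (fun t => ((q t : ℂ) - z * (r t : ℂ)) * u t) (Ioc a b) :=
    (intervalIntegrable_iff_integrableOn_Ioc_of_le hab).1 hu2i
  have hg1 : IntegrableOn (fun t => v1 t / (p t : ℂ)) (Ioc a b) :=
    (intervalIntegrable_iff_integrableOn_Ioc_of_le hab).1 hv1i
  have hg2 : IntegrableOn (fun t => ((q t : ℂ) - z * (r t : ℂ)) * v t) (Ioc a b) :=
    (intervalIntegrable_iff_integrableOn_Ioc_of_le hab).1 hv2i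
  have A := parts_primitive a b hab (fun t => u1 t / (p t : ℂ))
    (fun t => ((q t : ℂ) - z * (r t : ℂ)) * v t) 1 1 u v1 hf1 hg2
    (fun x hx => (huF x hx).trans (by rw [integral_of_le hx.1]))
    (fun x hx => (hv1F x hx).trans (by rw [integral_of_le hx.1]))
  have B := parts_primitive a b hab (fun t => ((q t : ℂ) - z * (r t : ℂ)) * u t)
    (fun t => v1 t / (p t : ℂ)) 0 0 u1 v hf2 hg1
    (fun x hx => (hu1F x hx).trans (by rw [integral_of_le hx.1]))
    (fun x hx => (hvF x hx).trans (by rw [integral_of_le hx.1]))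
  have hEq : (fun x => u1 x / (p x : ℂ) * v1 x + ((q x : ℂ) - z * (r x : ℂ)) * v x * u x)
      = fun x => ((q x : ℂ) - z * (r x : ℂ)) * u x * v x + v1 x / (p x : ℂ) * u1 x := by
    funext x; ring
  rw [hEq] at A
  rw [← B] at A
  linear_combination A

theorem statement6 (a b : ℝ) (hab : a < b) (p q r : ℝ → ℝ)
    (hpqr : Hyp31 a b p q r) (z : ℂ)
    (θ0 θ01 φ0 φ01 θ θ1 φ φ1 : ℝ → ℂ)
    (hθ0 : IsIntegratedSol a b p q r 0 θ0 θ01 1 0)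
    (hφ0 : IsIntegratedSol a b p q r 0 φ0 φ01 0 1)
    (hθ : IsIntegratedSol a b p q r z θ θ1 1 0)
    (hφ : IsIntegratedSol a b p q r z φ φ1 0 1)
    (V1 V2 : (ℝ → ℂ) → (ℝ → ℂ) → ℂ)
    (hV1 : ∀ g g1 : ℝ → ℂ, V1 g g1 = g b - θ0 b * g a - φ0 b * g1 a)
    (hV2 : ∀ g g1 : ℝ → ℂ, V2 g g1 = g1 b - θ01 b * g a - φ01 b * g1 a)
    (FK DK : ℂ)
    (hFK : FK = V1 θ θ1 * V2 φ φ1 - V2 θ θ1 * V1 φ φ1)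
    (hDK : DK = (φ01 b * θ b + θ0 b * φ1 b - φ0 b * θ1 b - θ01 b * φ b) / 2) :
    FK = -2 * (DK - 1) := by
  have ha : a ∈ Icc a b := ⟨le_refl a, hab.le⟩
  have hθa : θ a = 1 := by simpa using hθ.2.2.1 a ha
  have hθ1a : θ1 a = 0 := by simpa using hθ.2.2.2 a ha
  have hφa : φ a = 0 := by simpa using hφ.2.2.1 a ha
  have hφ1a : φ1 a = 1 := by simpa using hφ.2.2.2 a ha
  have Wz := wronskian_one a b hab.le p q r z θ θ1 φ φ1 hθ hφ
  have W0 := wronskian_one a b hab.le p q r 0 θ0 θ01 φ0 φ01 hθ0 hφ0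
  rw [hFK, hV1, hV1, hV2, hV2, hDK, hθa, hθ1a, hφa, hφ1a]
  linear_combination Wz + W0
end

section
/- Let L > 0, α, β ∈ (0,π), and θ₀ ∈ (π/2,π). Let F_{α,β}(z) = cos α(−sin β · C_L(z) + cos β · S_L(z)) − sin α(sin β · z · S_L(z) + cos β · C_L(z)). Then, writing z(t) = t e^{iθ₀} for t > 0 and using the principal square root, F_{α,β}(z(t)) / [−(i/2) z(t)^{1/2} sin α sin β exp(−i z(t)^{1/2} L)] − 1 = O(t^{−1/2}) as t → ∞. -/
open Complex Filter Asymptotics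

noncomputable def CL (L : ℝ) (z : ℂ) : ℂ :=
  ∑' k : ℕ, (-1 : ℂ) ^ k * z ^ k * (L : ℂ) ^ (2 * k) / (Nat.factorial (2 * k) : ℂ)

noncomputable def SL (L : ℝ) (z : ℂ) : ℂ :=
  ∑' k : ℕ, (-1 : ℂ) ^ k * z ^ k * (L : ℂ) ^ (2 * k + 1) / (Nat.factorial (2 * k + 1) : ℂ)

noncomputable def FSep (L α β : ℝ) (z : ℂ) : ℂ :=
  (Real.cos α : ℂ) * (-(Real.sin β : ℂ) * CL L z + (Real.cos β : ℂ) * SL L z)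
    - (Real.sin α : ℂ) * ((Real.sin β : ℂ) * z * SL L z + (Real.cos β : ℂ) * CL L z)

noncomputable def FKrein (L : ℝ) (z : ℂ) : ℂ :=
  2 * (1 - CL L z) - (L : ℂ) * z * SL L z

lemma CL_sq (L : ℝ) (w : ℂ) : CL L (w ^ 2) = Complex.cos (w * L) := by
  rw [Complex.cos_eq_tsum, CL]
  refine tsum_congr fun k => ?_
  rw [mul_pow, pow_mul]
  ring

lemma SL_sq (L : ℝ) (w : ℂ) : w * SL L (w ^ 2) = Complex.sin (w * L) := by
  rw [Complex.sin_eq_tsum, SL, ← tsum_mul_left]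
  refine tsum_congr fun k => ?_
  rw [mul_pow, pow_add, pow_mul, pow_one]
  ring

lemma SL_sq' (L : ℝ) {w : ℂ} (hw : w ≠ 0) : SL L (w ^ 2) = Complex.sin (w * L) / w := by
  rw [eq_div_iff hw, mul_comm]; exact SL_sq L w

lemma cpow_half (t θ : ℝ) (ht : 0 < t) (h1 : -Real.pi < θ) (h2 : θ ≤ Real.pi) :
    ((t : ℂ) * Complex.exp (Complex.I * θ)) ^ (1 / 2 : ℂ)
      = (Real.sqrt t : ℂ) * Complex.exp (Complex.I * (θ / 2 : ℝ)) := by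
  have hz : (t : ℂ) * Complex.exp (Complex.I * θ)
      = Complex.exp ((Real.log t : ℂ) + Complex.I * θ) := by
    rw [Complex.exp_add, ← Complex.ofReal_exp, Real.exp_log ht]
  have hne : (t : ℂ) * Complex.exp (Complex.I * θ) ≠ 0 := by
    rw [hz]; exact Complex.exp_ne_zero _
  have him1 : ((Real.log t : ℂ) + Complex.I * θ).im = θ := by simp
  rw [Complex.cpow_def_of_ne_zero hne, hz,
    Complex.log_exp (by rw [him1]; exact h1) (by rw [him1]; exact h2)]
  have : ((Real.log t : ℂ) + Complex.I * θ) * (1 / 2)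
      = (Real.log t / 2 : ℝ) + Complex.I * ((θ / 2 : ℝ) : ℂ) := by
    push_cast; ring
  rw [this, Complex.exp_add, ← Complex.ofReal_exp, Real.sqrt_eq_rpow,
    Real.rpow_def_of_pos ht, mul_one_div]

lemma key_id (sa ca sb cb w E E' : ℂ) (hsa : sa ≠ 0) (hsb : sb ≠ 0) (hw : w ≠ 0)
    (hEE' : E * E' = 1) :
    (ca * (-sb * ((E + E') / 2) + cb * ((E' - E) * Complex.I / 2 / w))
      - sa * (sb * w ^ 2 * ((E' - E) * Complex.I / 2 / w) + cb * ((E + E') / 2)))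
      / (-(Complex.I / 2) * w * sa * sb * E') - 1
    = -(E ^ 2) - Complex.I * (sa * cb + ca * sb) * (1 + E ^ 2) / (w * sa * sb)
        - ca * cb * (1 - E ^ 2) / (w ^ 2 * sa * sb) := by
  have hE' : E' ≠ 0 := by intro h; rw [h, mul_zero] at hEE'; exact zero_ne_one hEE'
  have hD : (-(Complex.I / 2) * w * sa * sb * E') ≠ 0 := by
    simp [hsa, hsb, hw, hE', Complex.I_ne_zero]
  have hwsab : w ^ 2 * sa * sb ≠ 0 := by simp [hsa, hsb, hw]
  set X := (ca * (-sb * ((E + E') / 2) + cb * ((E' - E) * Complex.I / 2 / w))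
      - sa * (sb * w ^ 2 * ((E' - E) * Complex.I / 2 / w) + cb * ((E + E') / 2))) with hXdef
  set N := (1 - E ^ 2) * (w ^ 2 * sa * sb) - Complex.I * (sa * cb + ca * sb) * (1 + E ^ 2) * w
      - ca * cb * (1 - E ^ 2) with hNdef
  have core : (ca * (-sb * w * (E + E') / 2 + cb * ((E' - E) * Complex.I / 2))
      - sa * (sb * w ^ 2 * ((E' - E) * Complex.I / 2) + cb * w * (E + E') / 2)) * (w * sa * sb)
      = N * (-(Complex.I / 2) * w * sa * sb * E') := by
    rw [hNdef]
    linear_combination (sa * ca * sb * cb * w * E * Complex.I / 2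
        - sa * ca * sb ^ 2 * w ^ 2 * E * Complex.I ^ 2 / 2
        - sa ^ 2 * sb * cb * w ^ 2 * E * Complex.I ^ 2 / 2
        - sa ^ 2 * sb ^ 2 * w ^ 3 * E * Complex.I / 2) * hEE'
      + (-(sa * ca * sb ^ 2 * w ^ 2 * (E' + E) / 2)
        - sa ^ 2 * sb * cb * w ^ 2 * (E' + E) / 2) * Complex.I_mul_I
  have hXw : X * w = (ca * (-sb * w * (E + E') / 2 + cb * ((E' - E) * Complex.I / 2))
      - sa * (sb * w ^ 2 * ((E' - E) * Complex.I / 2) + cb * w * (E + E') / 2)) := by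
    rw [hXdef]; field_simp
  have main : X * (w ^ 2 * sa * sb) = N * (-(Complex.I / 2) * w * sa * sb * E') := by
    calc X * (w ^ 2 * sa * sb) = (X * w) * (w * sa * sb) := by ring
    _ = _ := by rw [hXw]; exact core
  rw [sub_eq_iff_eq_add]
  have hR1 : -(E ^ 2) - Complex.I * (sa * cb + ca * sb) * (1 + E ^ 2) / (w * sa * sb)
        - ca * cb * (1 - E ^ 2) / (w ^ 2 * sa * sb) + 1 = N / (w ^ 2 * sa * sb) := by
    rw [hNdef]; field_simp; ring
  rw [hR1, div_eq_div_iff hD hwsab]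
  linear_combination main

theorem statement8 (L : ℝ) (hL : 0 < L) (α β θ₀ : ℝ)
    (hα : α ∈ Set.Ioo 0 Real.pi) (hβ : β ∈ Set.Ioo 0 Real.pi)
    (hθ₀ : θ₀ ∈ Set.Ioo (Real.pi / 2) Real.pi) :
    (fun t : ℝ =>
      FSep L α β ((t : ℂ) * Complex.exp (Complex.I * θ₀)) /
        (-(Complex.I / 2) * ((t : ℂ) * Complex.exp (Complex.I * θ₀)) ^ (1 / 2 : ℂ)
          * (Real.sin α : ℂ) * (Real.sin β : ℂ)
          * Complex.exp (-Complex.I * ((t : ℂ) * Complex.exp (Complex.I * θ₀)) ^ (1 / 2 : ℂ) * L))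
        - 1)
      =O[atTop] (fun t : ℝ => t ^ (-(1 / 2 : ℝ))) := by
  obtain ⟨hα0, hαπ⟩ := hα
  obtain ⟨hβ0, hβπ⟩ := hβ
  obtain ⟨hθ1, hθ2⟩ := hθ₀
  have hπ := Real.pi_pos
  have hsa : 0 < Real.sin α := Real.sin_pos_of_pos_of_lt_pi hα0 hαπ
  have hsb : 0 < Real.sin β := Real.sin_pos_of_pos_of_lt_pi hβ0 hβπ
  set s : ℝ := Real.sin (θ₀ / 2) with hs_def
  have hs : 0 < s := Real.sin_pos_of_pos_of_lt_pi (by linarith) (by linarith)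
  rw [isBigO_iff]
  refine ⟨1 / (2 * L * s) + 4 / (Real.sin α * Real.sin β), ?_⟩
  filter_upwards [eventually_ge_atTop 1] with t ht
  have ht0 : (0 : ℝ) < t := lt_of_lt_of_le one_pos ht
  set r : ℝ := Real.sqrt t with hr_def
  have hr1 : (1 : ℝ) ≤ r := by
    rw [hr_def, show (1:ℝ) = Real.sqrt 1 by simp]
    exact Real.sqrt_le_sqrt ht
  have hr0 : (0 : ℝ) < r := lt_of_lt_of_le one_pos hr1
  set w : ℂ := (r : ℂ) * Complex.exp (Complex.I * ((θ₀ / 2 : ℝ) : ℂ)) with hw_def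
  have hwne : w ≠ 0 := by
    rw [hw_def]
    exact mul_ne_zero (by exact_mod_cast hr0.ne') (Complex.exp_ne_zero _)
  have hw2 : w ^ 2 = (t : ℂ) * Complex.exp (Complex.I * (θ₀ : ℂ)) := by
    rw [hw_def, mul_pow, sq (Complex.exp _), ← Complex.exp_add]
    congr 1
    · norm_cast
      exact Real.sq_sqrt ht0.le
    · push_cast; ring
  have hcpow : ((t : ℂ) * Complex.exp (Complex.I * (θ₀ : ℂ))) ^ (1 / 2 : ℂ) = w := by
    rw [cpow_half t θ₀ ht0 (by linarith) hθ2.le, hw_def, hr_def]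
  set E : ℂ := Complex.exp (w * (L : ℂ) * Complex.I) with hE_def
  set E' : ℂ := Complex.exp (-(w * (L : ℂ)) * Complex.I) with hE'_def
  have hEE' : E * E' = 1 := by
    rw [hE_def, hE'_def, ← Complex.exp_add,
      show w * (L : ℂ) * Complex.I + -(w * (L : ℂ)) * Complex.I = 0 by ring, Complex.exp_zero]
  have hcos : Complex.cos (w * (L : ℂ)) = (E + E') / 2 := rfl
  have hsin : Complex.sin (w * (L : ℂ)) = (E' - E) * Complex.I / 2 := rfl
  have hexp : Complex.exp (-Complex.I * w * (L : ℂ)) = E' := by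
    rw [hE'_def, show -Complex.I * w * (L : ℂ) = -(w * (L : ℂ)) * Complex.I by ring]
  have hsa' : ((Real.sin α : ℝ) : ℂ) ≠ 0 := by exact_mod_cast hsa.ne'
  have hsb' : ((Real.sin β : ℝ) : ℂ) ≠ 0 := by exact_mod_cast hsb.ne'
  rw [hcpow, ← hw2, FSep, CL_sq, SL_sq' L hwne, hcos, hsin, hexp,
    key_id _ _ _ _ _ _ _ hsa' hsb' hwne hEE']
  -- Now bound the norm of the remainder
  have hnw : ‖w‖ = r := by
    rw [hw_def, norm_mul, Complex.norm_real, Real.norm_eq_abs, abs_of_pos hr0,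
      Complex.norm_exp]
    simp
  have him : w.im = r * s := by
    rw [hw_def, mul_comm Complex.I, Complex.mul_im, Complex.exp_ofReal_mul_I_im]
    simp [hs_def]
  have hnE : ‖E‖ = Real.exp (-(L * (r * s))) := by
    rw [hE_def, Complex.norm_exp]
    congr 1
    simp [Complex.mul_re, Complex.mul_im, him]
    ring
  have hx : 0 < L * (r * s) := by positivity
  have hnE2 : ‖E ^ 2‖ = Real.exp (-(2 * (L * (r * s)))) := by
    rw [norm_pow, hnE, sq, ← Real.exp_add]
    ring_nf
  have hE2le1 : ‖E ^ 2‖ ≤ 1 := by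
    rw [hnE2]
    exact Real.exp_le_one_iff.mpr (by linarith)
  have hE2ler : ‖E ^ 2‖ ≤ 1 / (2 * L * s) * (1 / r) := by
    rw [hnE2, Real.exp_neg]
    have h1 : 2 * (L * (r * s)) ≤ Real.exp (2 * (L * (r * s))) :=
      le_trans (by linarith) (Real.add_one_le_exp _)
    have h2 : (Real.exp (2 * (L * (r * s))))⁻¹ ≤ (2 * (L * (r * s)))⁻¹ :=
      inv_anti₀ (by linarith) h1
    calc (Real.exp (2 * (L * (r * s))))⁻¹ ≤ (2 * (L * (r * s)))⁻¹ := h2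
      _ = 1 / (2 * L * s) * (1 / r) := by
        field_simp
  have hσ : ((Real.sin α : ℂ) * (Real.cos β : ℂ) + (Real.cos α : ℂ) * (Real.sin β : ℂ))
      = ((Real.sin (α + β) : ℝ) : ℂ) := by
    push_cast [Real.sin_add]; ring
  have hσn : ‖(Real.sin α : ℂ) * (Real.cos β : ℂ) + (Real.cos α : ℂ) * (Real.sin β : ℂ)‖ ≤ 1 := by
    rw [hσ, Complex.norm_real, Real.norm_eq_abs]
    exact abs_le.mpr ⟨Real.neg_one_le_sin _, Real.sin_le_one _⟩
  have hcan : ‖(Real.cos α : ℂ)‖ ≤ 1 := by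
    rw [Complex.norm_real, Real.norm_eq_abs]
    exact abs_le.mpr ⟨Real.neg_one_le_cos _, Real.cos_le_one _⟩
  have hcbn : ‖(Real.cos β : ℂ)‖ ≤ 1 := by
    rw [Complex.norm_real, Real.norm_eq_abs]
    exact abs_le.mpr ⟨Real.neg_one_le_cos _, Real.cos_le_one _⟩
  have h1pE : ‖1 + E ^ 2‖ ≤ 2 := by
    calc ‖1 + E ^ 2‖ ≤ ‖(1:ℂ)‖ + ‖E ^ 2‖ := norm_add_le _ _
      _ ≤ 1 + 1 := by rw [norm_one]; linarith
      _ = 2 := by norm_num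
  have h1mE : ‖1 - E ^ 2‖ ≤ 2 := by
    calc ‖1 - E ^ 2‖ ≤ ‖(1:ℂ)‖ + ‖E ^ 2‖ := norm_sub_le _ _
      _ ≤ 1 + 1 := by rw [norm_one]; linarith
      _ = 2 := by norm_num
  have hrhs : ‖t ^ (-(1 / 2 : ℝ))‖ = 1 / r := by
    rw [Real.norm_eq_abs, abs_of_pos (Real.rpow_pos_of_pos ht0 _), Real.rpow_neg ht0.le,
      ← Real.sqrt_eq_rpow, hr_def, one_div]
  rw [hrhs]
  have hnsab : ‖w * (Real.sin α : ℂ) * (Real.sin β : ℂ)‖ = r * (Real.sin α * Real.sin β) := by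
    rw [norm_mul, norm_mul, hnw, Complex.norm_real, Complex.norm_real, Real.norm_eq_abs,
      Real.norm_eq_abs, abs_of_pos hsa, abs_of_pos hsb]
    ring
  have hnsab2 : ‖w ^ 2 * (Real.sin α : ℂ) * (Real.sin β : ℂ)‖
      = r ^ 2 * (Real.sin α * Real.sin β) := by
    rw [norm_mul, norm_mul, norm_pow, hnw, Complex.norm_real, Complex.norm_real,
      Real.norm_eq_abs, Real.norm_eq_abs, abs_of_pos hsa, abs_of_pos hsb]
    ring
  have hmid : ‖Complex.I * ((Real.sin α : ℂ) * (Real.cos β : ℂ)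
        + (Real.cos α : ℂ) * (Real.sin β : ℂ)) * (1 + E ^ 2)
        / (w * (Real.sin α : ℂ) * (Real.sin β : ℂ))‖
      ≤ 2 / (Real.sin α * Real.sin β) * (1 / r) := by
    rw [norm_div, norm_mul, norm_mul, Complex.norm_I, one_mul, hnsab]
    calc ‖_‖ * ‖1 + E ^ 2‖ / (r * (Real.sin α * Real.sin β))
        ≤ 1 * 2 / (r * (Real.sin α * Real.sin β)) := by
          gcongr
      _ = 2 / (Real.sin α * Real.sin β) * (1 / r) := by
          field_simp
  have hlast : ‖(Real.cos α : ℂ) * (Real.cos β : ℂ) * (1 - E ^ 2)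
        / (w ^ 2 * (Real.sin α : ℂ) * (Real.sin β : ℂ))‖
      ≤ 2 / (Real.sin α * Real.sin β) * (1 / r) := by
    rw [norm_div, norm_mul, norm_mul, hnsab2]
    have hr2 : r ≤ r ^ 2 := by nlinarith
    calc ‖(Real.cos α : ℂ)‖ * ‖(Real.cos β : ℂ)‖ * ‖1 - E ^ 2‖
          / (r ^ 2 * (Real.sin α * Real.sin β))
        ≤ 1 * 1 * 2 / (r * (Real.sin α * Real.sin β)) := by
          gcongr
      _ = 2 / (Real.sin α * Real.sin β) * (1 / r) := by
          field_simp
  calc ‖-(E ^ 2) - Complex.I * ((Real.sin α : ℂ) * (Real.cos β : ℂ)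
        + (Real.cos α : ℂ) * (Real.sin β : ℂ)) * (1 + E ^ 2)
        / (w * (Real.sin α : ℂ) * (Real.sin β : ℂ))
        - (Real.cos α : ℂ) * (Real.cos β : ℂ) * (1 - E ^ 2)
        / (w ^ 2 * (Real.sin α : ℂ) * (Real.sin β : ℂ))‖
      ≤ ‖-(E ^ 2) - Complex.I * ((Real.sin α : ℂ) * (Real.cos β : ℂ)
        + (Real.cos α : ℂ) * (Real.sin β : ℂ)) * (1 + E ^ 2)
        / (w * (Real.sin α : ℂ) * (Real.sin β : ℂ))‖
        + ‖(Real.cos α : ℂ) * (Real.cos β : ℂ) * (1 - E ^ 2)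
        / (w ^ 2 * (Real.sin α : ℂ) * (Real.sin β : ℂ))‖ := norm_sub_le _ _
    _ ≤ ‖-(E ^ 2)‖ + ‖Complex.I * ((Real.sin α : ℂ) * (Real.cos β : ℂ)
        + (Real.cos α : ℂ) * (Real.sin β : ℂ)) * (1 + E ^ 2)
        / (w * (Real.sin α : ℂ) * (Real.sin β : ℂ))‖
        + ‖(Real.cos α : ℂ) * (Real.cos β : ℂ) * (1 - E ^ 2)
        / (w ^ 2 * (Real.sin α : ℂ) * (Real.sin β : ℂ))‖ := by
          gcongr ?_ + _
          exact norm_sub_le _ _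
    _ ≤ 1 / (2 * L * s) * (1 / r) + 2 / (Real.sin α * Real.sin β) * (1 / r)
        + 2 / (Real.sin α * Real.sin β) * (1 / r) := by
          gcongr
          rw [norm_neg]; exact hE2ler
    _ = (1 / (2 * L * s) + 4 / (Real.sin α * Real.sin β)) * (1 / r) := by ring
end

section
/- Let n₁, n₂ ∈ ℕ with n₁, n₂ ≥ 1, and m_j ∈ (n_j, n_j+1) for j = 1, 2. For ℓ = 1, 2, 3, … set λ_ℓ^{(j)} = ℓ² − m_j². Define the relative spectral zeta series ζ(s) = ∑_{ℓ=1}^∞ [(λ_ℓ^{(2)})^{−s} − (λ_ℓ^{(1)})^{−s}], where for λ > 0, λ^{−s} := exp(−s log λ) with the real logarithm, and for λ < 0, λ^{−s} := exp(−s(log|λ| − iπ)). Then there exists a function Z : ℂ → ℂ, holomorphic on Ω = {s ∈ ℂ | −1/2 < Re s < 1 and s ≠ 1/2}, such that Z(s) = ζ(s) for all s with 1/2 < Re s < 1, and Z'(0) = iπ(n₂ − n₁) + log(|sin(πm₁) m₂ / (sin(πm₂) m₁)|). -/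
open Complex Filter Topology

/-- The paper's branch convention for `λ^{-s}`: for `λ > 0`, `λ^{-s} = exp(-s log λ)`;
for `λ < 0` (and `λ = 0`), `λ^{-s} = exp(-s (log|λ| - iπ))`. -/
noncomputable def branchPow (lam : ℝ) (s : ℂ) : ℂ :=
  if 0 < lam then Complex.exp (-s * (Real.log lam : ℂ))
  else Complex.exp (-s * ((Real.log |lam| : ℂ) - Real.pi * Complex.I))

namespace Statement16Aux

/-- The (constant) exponent appearing in `branchPow`. -/
noncomputable def bpc (lam : ℝ) : ℂ :=
  if 0 < lam then (Real.log lam : ℂ) else ((Real.log |lam| : ℂ) - Real.pi * Complex.I)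

lemma branchPow_eq (lam : ℝ) (s : ℂ) : branchPow lam s = Complex.exp (-s * bpc lam) := by
  unfold branchPow bpc
  split <;> rfl

lemma hasDerivAt_branchPow (lam : ℝ) (x : ℂ) :
    HasDerivAt (branchPow lam) (Complex.exp (-x * bpc lam) * (-bpc lam)) x := by
  have h1 : HasDerivAt (fun s : ℂ => -s * bpc lam) (-bpc lam) x := by
    simpa using ((hasDerivAt_id x).neg.mul_const (bpc lam))
  have h2 := h1.cexp
  have hfun : branchPow lam = fun s => Complex.exp (-s * bpc lam) := funext (branchPow_eq lam)
  rw [hfun]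
  exact h2

lemma differentiable_branchPow (lam : ℝ) : Differentiable ℂ (branchPow lam) :=
  fun x => (hasDerivAt_branchPow lam x).differentiableAt

lemma norm_branchPow_le (lam : ℝ) {s : ℂ} {R : ℝ} (hs : ‖s‖ ≤ R) :
    ‖branchPow lam s‖ ≤ Real.exp (R * ‖bpc lam‖) := by
  rw [branchPow_eq, Complex.norm_exp, Real.exp_le_exp]
  calc (-s * bpc lam).re ≤ ‖-s * bpc lam‖ := Complex.re_le_norm _
    _ = ‖s‖ * ‖bpc lam‖ := by
        rw [norm_mul, norm_neg]
    _ ≤ R * ‖bpc lam‖ :=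
        mul_le_mul_of_nonneg_right hs (norm_nonneg _)

lemma fine_bound (m₁ m₂ σ R : ℝ) (hσ0 : 0 ≤ σ) (ℓ : ℕ+)
    (hb1 : 2*m₁^2 + 2 ≤ (ℓ:ℝ)^2) (hb2 : 2*m₂^2 + 2 ≤ (ℓ:ℝ)^2)
    (hbR : 2*R*|m₂^2 - m₁^2| ≤ (ℓ:ℝ)^2)
    {s : ℂ} (hre : -σ ≤ s.re) (habs : ‖s‖ ≤ R) :
    ‖branchPow ((ℓ:ℝ)^2 - m₂^2) s - branchPow ((ℓ:ℝ)^2 - m₁^2) s‖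
      ≤ 4*R*|m₂^2 - m₁^2| * (ℓ:ℝ) ^ (2*σ - 2 : ℝ) := by
  have hR : 0 ≤ R := le_trans (norm_nonneg s) habs
  have hℓ1 : (1:ℝ) ≤ (ℓ:ℝ) := by exact_mod_cast ℓ.one_le
  have hℓ0 : (0:ℝ) < (ℓ:ℝ) := lt_of_lt_of_le zero_lt_one hℓ1
  have hL1 : (1:ℝ) ≤ (ℓ:ℝ)^2 := by nlinarith
  have hLpos : (0:ℝ) < (ℓ:ℝ)^2 := by positivity
  have h1 : (0:ℝ) < (ℓ:ℝ)^2 - m₁^2 := by nlinarith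
  have h2 : (0:ℝ) < (ℓ:ℝ)^2 - m₂^2 := by nlinarith
  have h1' : (ℓ:ℝ)^2/2 ≤ (ℓ:ℝ)^2 - m₁^2 := by nlinarith
  have h2' : (ℓ:ℝ)^2/2 ≤ (ℓ:ℝ)^2 - m₂^2 := by nlinarith
  have hone1 : (1:ℝ) ≤ (ℓ:ℝ)^2 - m₁^2 := by nlinarith
  set a₁ : ℝ := Real.log ((ℓ:ℝ)^2 - m₁^2) with ha₁
  set a₂ : ℝ := Real.log ((ℓ:ℝ)^2 - m₂^2) with ha₂
  have ha₁0 : 0 ≤ a₁ := Real.log_nonneg hone1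
  have e1 : branchPow ((ℓ:ℝ)^2 - m₁^2) s = Complex.exp (-s * (a₁ : ℂ)) := by
    unfold branchPow; rw [if_pos h1]
  have e2 : branchPow ((ℓ:ℝ)^2 - m₂^2) s = Complex.exp (-s * (a₂ : ℂ)) := by
    unfold branchPow; rw [if_pos h2]
  rw [e1, e2]
  have key : Complex.exp (-s*(a₂:ℂ)) - Complex.exp (-s*(a₁:ℂ))
      = Complex.exp (-s*(a₁:ℂ)) * (Complex.exp (-s*((a₂ - a₁ : ℝ):ℂ)) - 1) := by
    rw [mul_sub, mul_one, ← Complex.exp_add]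
    congr 2
    push_cast
    ring
  rw [key, norm_mul]
  -- bound first factor
  have hnorm1 : ‖Complex.exp (-s*(a₁:ℂ))‖ ≤ (ℓ:ℝ) ^ (2*σ : ℝ) := by
    rw [Complex.norm_exp]
    have hre' : (-s*(a₁:ℂ)).re = -s.re * a₁ := by
      simp [Complex.mul_re]
    rw [hre']
    have hstep : -s.re * a₁ ≤ σ * a₁ := mul_le_mul_of_nonneg_right (by linarith) ha₁0
    calc Real.exp (-s.re*a₁) ≤ Real.exp (σ*a₁) := Real.exp_le_exp.2 hstep
      _ = ((ℓ:ℝ)^2 - m₁^2) ^ (σ:ℝ) := by rw [Real.rpow_def_of_pos h1, mul_comm]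
      _ ≤ ((ℓ:ℝ)^2) ^ (σ:ℝ) := Real.rpow_le_rpow (le_of_lt h1) (by nlinarith) hσ0
      _ = (ℓ:ℝ) ^ (2*σ:ℝ) := by
          rw [← Real.rpow_natCast (ℓ:ℝ) 2, ← Real.rpow_mul (le_of_lt hℓ0)]
          norm_num [mul_comm]
  -- bound on |a₂ - a₁|
  have hδ : |a₂ - a₁| ≤ 2*|m₂^2 - m₁^2| / ((ℓ:ℝ)^2) := by
    have hh5 : ∀ x : ℝ, |x| / ((ℓ:ℝ)^2/2) = 2*|x|/((ℓ:ℝ)^2) := by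
      intro x; rw [div_div_eq_mul_div]; ring
    rw [abs_le]
    constructor
    · have hlog := Real.log_le_sub_one_of_pos (div_pos h1 h2)
      rw [Real.log_div (ne_of_gt h1) (ne_of_gt h2)] at hlog
      have h3 : ((ℓ:ℝ)^2 - m₁^2)/((ℓ:ℝ)^2 - m₂^2) - 1 = (m₂^2 - m₁^2)/((ℓ:ℝ)^2 - m₂^2) := by
        field_simp
        ring
      rw [h3] at hlog
      have h4 : (m₂^2 - m₁^2)/((ℓ:ℝ)^2 - m₂^2) ≤ |m₂^2-m₁^2|/((ℓ:ℝ)^2/2) :=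
        div_le_div₀ (abs_nonneg _) (le_abs_self _) (by linarith) h2'
      rw [hh5] at h4
      linarith
    · have hlog := Real.log_le_sub_one_of_pos (div_pos h2 h1)
      rw [Real.log_div (ne_of_gt h2) (ne_of_gt h1)] at hlog
      have h3 : ((ℓ:ℝ)^2 - m₂^2)/((ℓ:ℝ)^2 - m₁^2) - 1 = (m₁^2 - m₂^2)/((ℓ:ℝ)^2 - m₁^2) := by
        field_simp
        ring
      rw [h3] at hlog
      have h4 : (m₁^2 - m₂^2)/((ℓ:ℝ)^2 - m₁^2) ≤ |m₂^2-m₁^2|/((ℓ:ℝ)^2/2) := by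
        apply div_le_div₀ (abs_nonneg _) ?_ (by linarith) h1'
        rw [abs_sub_comm]; exact le_abs_self _
      rw [hh5] at h4
      linarith
  -- bound second factor
  have hzabs : ‖-s * ((a₂ - a₁ : ℝ):ℂ)‖ ≤ R * (2*|m₂^2-m₁^2|/((ℓ:ℝ)^2)) := by
    rw [norm_mul, norm_neg, Complex.norm_real, Real.norm_eq_abs]
    exact mul_le_mul habs hδ (abs_nonneg _) hR
  have hval : R * (2*|m₂^2-m₁^2|/((ℓ:ℝ)^2)) = 2*R*|m₂^2-m₁^2|/((ℓ:ℝ)^2) := by ring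
  have hz1 : ‖-s * ((a₂ - a₁ : ℝ):ℂ)‖ ≤ 1 := by
    refine le_trans hzabs ?_
    rw [hval, div_le_one hLpos]
    exact hbR
  have hexp := Complex.norm_exp_sub_one_le hz1
  have hnorm2 : ‖Complex.exp (-s*((a₂ - a₁ : ℝ):ℂ)) - 1‖ ≤ 4*R*|m₂^2-m₁^2|/((ℓ:ℝ)^2) := by
    calc ‖Complex.exp (-s*((a₂ - a₁ : ℝ):ℂ)) - 1‖
        ≤ 2 * ‖-s * ((a₂ - a₁ : ℝ):ℂ)‖ := hexp
      _ ≤ 2 * (R * (2*|m₂^2-m₁^2|/((ℓ:ℝ)^2))) := by linarith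
      _ = 4*R*|m₂^2-m₁^2|/((ℓ:ℝ)^2) := by ring
  calc ‖Complex.exp (-s*(a₁:ℂ))‖ * ‖Complex.exp (-s*((a₂ - a₁ : ℝ):ℂ)) - 1‖
      ≤ ((ℓ:ℝ) ^ (2*σ : ℝ)) * (4*R*|m₂^2-m₁^2|/((ℓ:ℝ)^2)) := by
        apply mul_le_mul hnorm1 hnorm2 (norm_nonneg _) (Real.rpow_nonneg (le_of_lt hℓ0) _)
    _ = 4*R*|m₂^2 - m₁^2| * (ℓ:ℝ) ^ (2*σ - 2 : ℝ) := by
        rw [Real.rpow_sub hℓ0]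
        rw [show ((ℓ:ℝ)) ^ ((2:ℝ)) = (ℓ:ℝ)^2 from by
          rw [← Real.rpow_natCast (ℓ:ℝ) 2]; norm_num]
        ring

lemma key_bound (m₁ m₂ σ R : ℝ) (hσ0 : 0 ≤ σ) (hσ : σ < 1/2) (hR : 0 ≤ R) :
    ∃ u : ℕ+ → ℝ, Summable u ∧ ∀ (ℓ : ℕ+) (s : ℂ), -σ ≤ s.re → ‖s‖ ≤ R →
      ‖branchPow ((ℓ:ℝ)^2 - m₂^2) s - branchPow ((ℓ:ℝ)^2 - m₁^2) s‖ ≤ u ℓ := by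
  classical
  set B : ℝ := max (max (2*m₁^2+2) (2*m₂^2+2)) (2*R*|m₂^2-m₁^2|) with hB
  set crude : ℕ+ → ℝ := fun ℓ =>
    Real.exp (R * ‖bpc ((ℓ:ℝ)^2 - m₂^2)‖)
      + Real.exp (R * ‖bpc ((ℓ:ℝ)^2 - m₁^2)‖) with hcrude
  refine ⟨fun ℓ => 4*R*|m₂^2-m₁^2| * (ℓ:ℝ)^(2*σ-2:ℝ)
      + (if (ℓ:ℝ)^2 < B then crude ℓ else 0), ?_, ?_⟩
  · apply Summable.add
    · apply Summable.mul_left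
      have h : Summable (fun n : ℕ => (n:ℝ)^(2*σ-2:ℝ)) :=
        Real.summable_nat_rpow.2 (by linarith)
      exact h.comp_injective PNat.coe_injective
    · apply summable_of_finite_support
      have hsub : Function.support (fun ℓ : ℕ+ => if ((ℓ:ℝ))^2 < B then crude ℓ else 0)
          ⊆ ((↑) : ℕ+ → ℕ) ⁻¹' (Set.Iio (⌈B⌉₊)) := by
        intro ℓ hℓ
        simp only [Function.mem_support, ne_eq, ite_eq_right_iff, not_forall] at hℓ
        obtain ⟨hlt, -⟩ := hℓ
        simp only [Set.mem_preimage, Set.mem_Iio]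
        have h1 : (1:ℝ) ≤ (ℓ:ℝ) := by exact_mod_cast ℓ.one_le
        have h2 : ((ℓ:ℕ):ℝ) < (⌈B⌉₊:ℝ) := by
          have hℓB : (ℓ:ℝ) < B := by nlinarith
          have := Nat.le_ceil B
          push_cast
          linarith
        exact_mod_cast h2
      exact Set.Finite.subset ((Set.finite_Iio _).preimage PNat.coe_injective.injOn) hsub
  · intro ℓ s hre habs
    dsimp only
    by_cases h : (ℓ:ℝ)^2 < B
    · rw [if_pos h]
      have hcr : ‖branchPow ((ℓ:ℝ)^2 - m₂^2) s - branchPow ((ℓ:ℝ)^2 - m₁^2) s‖ ≤ crude ℓ := by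
        refine le_trans (norm_sub_le _ _) ?_
        exact add_le_add (norm_branchPow_le _ habs) (norm_branchPow_le _ habs)
      have hpos : 0 ≤ 4*R*|m₂^2-m₁^2| * (ℓ:ℝ)^(2*σ-2:ℝ) := by positivity
      linarith
    · rw [if_neg h, add_zero]
      push_neg at h
      have hb1 : 2*m₁^2 + 2 ≤ (ℓ:ℝ)^2 := le_trans (le_trans (le_max_left _ _) (le_max_left _ _)) h
      have hb2 : 2*m₂^2 + 2 ≤ (ℓ:ℝ)^2 := le_trans (le_trans (le_max_right _ _) (le_max_left _ _)) h
      have hbR : 2*R*|m₂^2-m₁^2| ≤ (ℓ:ℝ)^2 := le_trans (le_max_right _ _) h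
      exact fine_bound m₁ m₂ σ R hσ0 ℓ hb1 hb2 hbR hre habs

lemma aux_tlu (m₁ m₂ : ℝ) (c : ℂ) (r : ℝ) (hr : 0 < r) (hcr : -(1/2:ℝ) < c.re - r) :
    TendstoLocallyUniformlyOn
      (fun (t : Finset ℕ+) (s : ℂ) =>
        ∑ ℓ ∈ t, (branchPow ((ℓ:ℝ)^2 - m₂^2) s - branchPow ((ℓ:ℝ)^2 - m₁^2) s))
      (fun s => ∑' ℓ : ℕ+, (branchPow ((ℓ:ℝ)^2 - m₂^2) s - branchPow ((ℓ:ℝ)^2 - m₁^2) s))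
      atTop (Metric.ball c r) := by
  obtain ⟨u, hu, hb⟩ := key_bound m₁ m₂ (max 0 (r - c.re)) (‖c‖ + r)
    (le_max_left _ _) (by rw [max_lt_iff]; constructor <;> linarith)
    (by positivity)
  apply TendstoUniformlyOn.tendstoLocallyUniformlyOn
  apply tendstoUniformlyOn_tsum hu
  intro ℓ s hs
  rw [Metric.mem_ball, Complex.dist_eq] at hs
  apply hb
  · have h1 : |(s - c).re| ≤ ‖s - c‖ := Complex.abs_re_le_norm _
    rw [Complex.sub_re] at h1
    have h2 : c.re - r ≤ s.re := by
      have := (abs_le.1 h1).1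
      linarith
    have h3 : -(max 0 (r - c.re)) ≤ c.re - r := by
      have := le_max_right 0 (r - c.re)
      linarith
    linarith
  · have h4 : ‖s‖ ≤ ‖s - c‖ + ‖c‖ := by
      simpa using norm_add_le (s - c) c
    linarith

lemma partial_diff (m₁ m₂ : ℝ) (t : Finset ℕ+) :
    Differentiable ℂ (fun s =>
      ∑ ℓ ∈ t, (branchPow ((ℓ:ℝ)^2 - m₂^2) s - branchPow ((ℓ:ℝ)^2 - m₁^2) s)) :=
  Differentiable.fun_sum fun ℓ _ => (differentiable_branchPow _).sub (differentiable_branchPow _)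

lemma not_int (m : ℝ) (n : ℕ) (hmn : (n:ℝ) < m) (hmn' : m < n+1) (k : ℕ) :
    m ≠ (k:ℝ) + 1 := by
  intro h
  have h1 : (n:ℝ) < (k:ℝ)+1 := h ▸ hmn
  have h2 : ((k:ℝ)+1) < (n:ℝ)+1 := h ▸ hmn'
  have h1' : n < k+1 := by exact_mod_cast h1
  have h2' : k+1 < n+1 := by exact_mod_cast h2
  omega

lemma q_ne_zero (m : ℝ) (n : ℕ) (hmn : (n:ℝ) < m) (hmn' : m < n+1) (k : ℕ) :
    (1 - m^2/((k:ℝ)+1)^2) ≠ 0 := by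
  have hm0 : 0 < m := lt_of_le_of_lt (Nat.cast_nonneg n) hmn
  intro h
  have hk1 : (0:ℝ) < (k:ℝ)+1 := by positivity
  have h2 : m^2 = ((k:ℝ)+1)^2 := by
    field_simp at h
    linarith
  have h4 : (m - ((k:ℝ)+1)) * (m + ((k:ℝ)+1)) = 0 := by linear_combination h2
  rcases mul_eq_zero.1 h4 with h5 | h5
  · exact not_int m n hmn hmn' k (by linarith)
  · linarith

lemma lam_ne_zero (m : ℝ) (n : ℕ) (hmn : (n:ℝ) < m) (hmn' : m < n+1) (k : ℕ) :
    ((k:ℝ)+1)^2 - m^2 ≠ 0 := by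
  have hk1 : (0:ℝ) < (k:ℝ)+1 := by positivity
  intro h
  apply q_ne_zero m n hmn hmn' k
  have : 1 - m^2/((k:ℝ)+1)^2 = (((k:ℝ)+1)^2 - m^2)/((k:ℝ)+1)^2 := by field_simp
  rw [this, h, zero_div]

lemma sin_pi_ne (m : ℝ) (n : ℕ) (hmn : (n:ℝ) < m) (hmn' : m < n+1) :
    Real.sin (Real.pi*m) ≠ 0 := by
  intro h
  rw [Real.sin_eq_zero_iff] at h
  obtain ⟨z, hz⟩ := h
  rw [mul_comm] at hz
  have hzm : (z:ℝ) = m := mul_left_cancel₀ Real.pi_ne_zero hz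
  rw [← hzm] at hmn hmn'
  have h1 : (n:ℤ) < z := by exact_mod_cast hmn
  have h2 : z < (n:ℤ)+1 := by exact_mod_cast hmn'
  omega

lemma log_hyp (m : ℝ) (n : ℕ) (hmn : (n:ℝ) < m) (hmn' : m < n+1) (k : ℕ) :
    Real.log |((k:ℝ)+1)^2 - m^2|
      = Real.log (1 - m^2/((k:ℝ)+1)^2) + Real.log (((k:ℝ)+1)^2) := by
  have hk1 : (0:ℝ) < (k:ℝ)+1 := by positivity
  have hk2 : ((k:ℝ)+1)^2 ≠ 0 := by positivity
  have hlam := lam_ne_zero m n hmn hmn' k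
  have hq : (1 - m^2/((k:ℝ)+1)^2) = (((k:ℝ)+1)^2 - m^2)/((k:ℝ)+1)^2 := by field_simp
  rw [Real.log_abs, hq, Real.log_div hlam hk2]
  ring

lemma bpc_eval (m : ℝ) (n : ℕ) (hmn : (n:ℝ) < m) (hmn' : m < n+1) (k : ℕ) :
    bpc (((k:ℝ)+1)^2 - m^2)
      = ((Real.log (1 - m^2/((k:ℝ)+1)^2) : ℝ) : ℂ) + ((Real.log (((k:ℝ)+1)^2) : ℝ) : ℂ)
        - (if k < n then (Real.pi:ℂ)*Complex.I else 0) := by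
  have hm0 : 0 < m := lt_of_le_of_lt (Nat.cast_nonneg n) hmn
  have hlog := log_hyp m n hmn hmn' k
  by_cases hkn : k < n
  · have hkn' : (k:ℝ)+1 ≤ (n:ℝ) := by exact_mod_cast hkn
    have hneg : ((k:ℝ)+1)^2 - m^2 < 0 := by nlinarith
    rw [bpc, if_neg (by linarith), if_pos hkn, hlog]
    push_cast
    ring
  · have hkn' : (n:ℝ)+1 ≤ (k:ℝ)+1 := by
      have : n ≤ k := not_lt.1 hkn
      have := (Nat.cast_le (α := ℝ)).2 this
      linarith
    have hpos : 0 < ((k:ℝ)+1)^2 - m^2 := by nlinarith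
    rw [bpc, if_pos hpos, if_neg hkn, ← Real.log_abs, hlog]
    push_cast
    ring

lemma sum_log_tendsto (m : ℝ) (n : ℕ) (hmn : (n:ℝ) < m) (hmn' : m < n+1) :
    Tendsto (fun N => ∑ k ∈ Finset.range N, Real.log (1 - m^2/((k:ℝ)+1)^2)) atTop
      (𝓝 (Real.log (Real.sin (Real.pi*m)/(Real.pi*m)))) := by
  have hm0 : 0 < m := lt_of_le_of_lt (Nat.cast_nonneg n) hmn
  have hπm : Real.pi * m ≠ 0 := by positivity
  have hprod : Tendsto (fun N => ∏ k ∈ Finset.range N, ((1:ℝ) - m^2/((k:ℝ)+1)^2)) atTop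
      (𝓝 (Real.sin (Real.pi*m)/(Real.pi*m))) := by
    have h := (Real.tendsto_euler_sin_prod m).div_const (Real.pi * m)
    refine h.congr fun N => ?_
    rw [mul_div_cancel_left₀ _ hπm]
  have hsin := sin_pi_ne m n hmn hmn'
  have hcomp := ((Real.continuousAt_log (div_ne_zero hsin hπm)).tendsto).comp hprod
  refine hcomp.congr fun N => ?_
  exact Real.log_prod (fun k _ => q_ne_zero m n hmn hmn' k)

lemma sum_indicator (n N : ℕ) (x : ℂ) :
    ∑ k ∈ Finset.range N, (if k < n then x else 0) = ((min n N : ℕ):ℂ) * x := by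
  classical
  rw [← Finset.sum_filter]
  have hfil : (Finset.range N).filter (fun k => k < n) = Finset.range (min n N) := by
    ext k
    simp only [Finset.mem_filter, Finset.mem_range, lt_min_iff]
    omega
  rw [hfil, Finset.sum_const, Finset.card_range, nsmul_eq_mul]

end Statement16Aux

open Statement16Aux in
theorem statement16 (n₁ n₂ : ℕ) (hn₁ : 1 ≤ n₁) (hn₂ : 1 ≤ n₂) (m₁ m₂ : ℝ)
    (hm₁ : m₁ ∈ Set.Ioo (n₁ : ℝ) (n₁ + 1)) (hm₂ : m₂ ∈ Set.Ioo (n₂ : ℝ) (n₂ + 1)) :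
    ∃ Z : ℂ → ℂ,
      DifferentiableOn ℂ Z {s : ℂ | -(1 / 2) < s.re ∧ s.re < 1 ∧ s ≠ 1 / 2} ∧
      (∀ s : ℂ, 1 / 2 < s.re → s.re < 1 →
        Z s = ∑' ℓ : ℕ+,
          (branchPow ((ℓ : ℝ) ^ 2 - m₂ ^ 2) s - branchPow ((ℓ : ℝ) ^ 2 - m₁ ^ 2) s)) ∧
      deriv Z 0 = Real.pi * ((n₂ : ℂ) - (n₁ : ℂ)) * Complex.I
        + (Real.log |Real.sin (Real.pi * m₁) * m₂ / (Real.sin (Real.pi * m₂) * m₁)| : ℂ) := by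
  obtain ⟨hm₁l, hm₁u⟩ := hm₁
  obtain ⟨hm₂l, hm₂u⟩ := hm₂
  have hm₁0 : (0:ℝ) < m₁ := lt_of_le_of_lt (Nat.cast_nonneg n₁) hm₁l
  have hm₂0 : (0:ℝ) < m₂ := lt_of_le_of_lt (Nat.cast_nonneg n₂) hm₂l
  refine ⟨fun s => ∑' ℓ : ℕ+,
      (branchPow ((ℓ : ℝ) ^ 2 - m₂ ^ 2) s - branchPow ((ℓ : ℝ) ^ 2 - m₁ ^ 2) s),
    ?_, fun s _ _ => rfl, ?_⟩
  · -- Differentiability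
    intro s₀ hs₀
    obtain ⟨h₀, -, -⟩ := hs₀
    have hr : (0:ℝ) < (s₀.re + 1/2)/2 := by linarith
    have hcr : -(1/2:ℝ) < s₀.re - (s₀.re + 1/2)/2 := by linarith
    have tlu := aux_tlu m₁ m₂ s₀ ((s₀.re + 1/2)/2) hr hcr
    have hdiff : DifferentiableOn ℂ
        (fun s => ∑' ℓ : ℕ+,
          (branchPow ((ℓ : ℝ) ^ 2 - m₂ ^ 2) s - branchPow ((ℓ : ℝ) ^ 2 - m₁ ^ 2) s))
        (Metric.ball s₀ ((s₀.re + 1/2)/2)) := by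
      apply tlu.differentiableOn ?_ Metric.isOpen_ball
      exact Eventually.of_forall fun t => (partial_diff m₁ m₂ t).differentiableOn
    exact (hdiff.differentiableAt
      (Metric.isOpen_ball.mem_nhds (Metric.mem_ball_self hr))).differentiableWithinAt
  · -- The derivative at 0
    have h0mem : (0:ℂ) ∈ Metric.ball (0:ℂ) (1/8 : ℝ) := Metric.mem_ball_self (by norm_num)
    have tlu := aux_tlu m₁ m₂ 0 (1/8) (by norm_num) (by simp; norm_num)
    have hFdiff : ∀ᶠ (t : Finset ℕ+) in atTop, DifferentiableOn ℂ
        (fun s => ∑ ℓ ∈ t,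
          (branchPow ((ℓ:ℝ)^2 - m₂^2) s - branchPow ((ℓ:ℝ)^2 - m₁^2) s))
        (Metric.ball (0:ℂ) (1/8:ℝ)) :=
      Eventually.of_forall fun t => (partial_diff m₁ m₂ t).differentiableOn
    have hders := tlu.deriv hFdiff Metric.isOpen_ball
    have htend := hders.tendsto_at h0mem
    set g : ℕ+ → ℂ := fun ℓ => bpc ((ℓ:ℝ)^2 - m₁^2) - bpc ((ℓ:ℝ)^2 - m₂^2) with hg
    have hcalc : ∀ t : Finset ℕ+,
        deriv (fun s => ∑ ℓ ∈ t,
          (branchPow ((ℓ:ℝ)^2 - m₂^2) s - branchPow ((ℓ:ℝ)^2 - m₁^2) s)) 0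
        = ∑ ℓ ∈ t, g ℓ := by
      intro t
      have hds : HasDerivAt (fun s => ∑ ℓ ∈ t,
          (branchPow ((ℓ:ℝ)^2 - m₂^2) s - branchPow ((ℓ:ℝ)^2 - m₁^2) s))
          (∑ ℓ ∈ t, g ℓ) 0 := by
        apply HasDerivAt.fun_sum
        intro ℓ _
        have h := (hasDerivAt_branchPow ((ℓ:ℝ)^2 - m₂^2) 0).fun_sub
          (hasDerivAt_branchPow ((ℓ:ℝ)^2 - m₁^2) 0)
        convert h using 1
        rw [hg]
        simp only [neg_zero, zero_mul, Complex.exp_zero, one_mul]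
        ring
      exact hds.deriv
    have hsum : HasSum g (deriv (fun s => ∑' ℓ : ℕ+,
        (branchPow ((ℓ : ℝ) ^ 2 - m₂ ^ 2) s - branchPow ((ℓ : ℝ) ^ 2 - m₁ ^ 2) s)) 0) := by
      have h := htend.congr hcalc
      exact h
    set e : ℕ ≃ ℕ+ := Equiv.pnatEquivNat.symm with he
    have hsum' : HasSum (g ∘ e) (deriv (fun s => ∑' ℓ : ℕ+,
        (branchPow ((ℓ : ℝ) ^ 2 - m₂ ^ 2) s - branchPow ((ℓ : ℝ) ^ 2 - m₁ ^ 2) s)) 0) :=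
      (Equiv.hasSum_iff e).2 hsum
    have htend2 := hsum'.tendsto_sum_nat
    -- identify the limit
    have hcast : ∀ k : ℕ, ((e k : ℕ+) : ℝ) = (k:ℝ)+1 := by
      intro k
      simp [he, Equiv.pnatEquivNat]
    have hterm : ∀ k : ℕ, (g ∘ e) k
        = ((Real.log (1 - m₁^2/((k:ℝ)+1)^2) - Real.log (1 - m₂^2/((k:ℝ)+1)^2) : ℝ) : ℂ)
          + ((if k < n₂ then (Real.pi:ℂ)*Complex.I else 0)
            - (if k < n₁ then (Real.pi:ℂ)*Complex.I else 0)) := by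
      intro k
      show bpc (((e k : ℕ+):ℝ)^2 - m₁^2) - bpc (((e k : ℕ+):ℝ)^2 - m₂^2) = _
      rw [hcast k, bpc_eval m₁ n₁ hm₁l hm₁u k, bpc_eval m₂ n₂ hm₂l hm₂u k]
      push_cast
      ring
    have hsumN : ∀ N, ∑ k ∈ Finset.range N, (g ∘ e) k
        = ((∑ k ∈ Finset.range N,
            (Real.log (1 - m₁^2/((k:ℝ)+1)^2) - Real.log (1 - m₂^2/((k:ℝ)+1)^2)) : ℝ) : ℂ)
          + (((min n₂ N : ℕ):ℂ) * ((Real.pi:ℂ)*Complex.I)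
            - ((min n₁ N : ℕ):ℂ) * ((Real.pi:ℂ)*Complex.I)) := by
      intro N
      rw [Finset.sum_congr rfl (fun k _ => hterm k), Finset.sum_add_distrib]
      congr 1
      · rw [Complex.ofReal_sum]
      · rw [Finset.sum_sub_distrib, sum_indicator, sum_indicator]
    have hlim1 := sum_log_tendsto m₁ n₁ hm₁l hm₁u
    have hlim2 := sum_log_tendsto m₂ n₂ hm₂l hm₂u
    have hlimR := hlim1.sub hlim2
    set Lr : ℝ := Real.log (Real.sin (Real.pi*m₁)/(Real.pi*m₁))
      - Real.log (Real.sin (Real.pi*m₂)/(Real.pi*m₂)) with hLr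
    have hlimC : Tendsto (fun N => ∑ k ∈ Finset.range N, (g ∘ e) k) atTop
        (𝓝 ((Lr : ℂ) + ((n₂:ℂ) * ((Real.pi:ℂ)*Complex.I)
          - (n₁:ℂ) * ((Real.pi:ℂ)*Complex.I)))) := by
      rw [funext hsumN]
      apply Tendsto.add
      · have h1 : Tendsto (fun N => ((∑ k ∈ Finset.range N,
            (Real.log (1 - m₁^2/((k:ℝ)+1)^2) - Real.log (1 - m₂^2/((k:ℝ)+1)^2)) : ℝ) : ℂ))
            atTop (𝓝 ((Lr : ℂ))) := by
          apply (Complex.continuous_ofReal.tendsto _).comp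
          refine hlimR.congr fun N => ?_
          rw [Finset.sum_sub_distrib]
        exact h1
      · apply Tendsto.congr' ?_ tendsto_const_nhds
        filter_upwards [eventually_ge_atTop (max n₁ n₂)] with N hN
        have h1 : min n₂ N = n₂ := by omega
        have h2 : min n₁ N = n₁ := by omega
        rw [h1, h2]
    have hval := tendsto_nhds_unique htend2 hlimC
    rw [hval]
    -- final real-log computation
    have hsin1 := sin_pi_ne m₁ n₁ hm₁l hm₁u
    have hsin2 := sin_pi_ne m₂ n₂ hm₂l hm₂u
    have hπm₁ : Real.pi * m₁ ≠ 0 := by positivity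
    have hπm₂ : Real.pi * m₂ ≠ 0 := by positivity
    have hreal : Lr = Real.log |Real.sin (Real.pi*m₁) * m₂ / (Real.sin (Real.pi*m₂) * m₁)| := by
      rw [hLr, Real.log_abs,
        Real.log_div (mul_ne_zero hsin1 (ne_of_gt hm₂0)) (mul_ne_zero hsin2 (ne_of_gt hm₁0)),
        Real.log_mul hsin1 (ne_of_gt hm₂0), Real.log_mul hsin2 (ne_of_gt hm₁0),
        Real.log_div hsin1 hπm₁, Real.log_div hsin2 hπm₂,
        Real.log_mul Real.pi_ne_zero (ne_of_gt hm₁0),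
        Real.log_mul Real.pi_ne_zero (ne_of_gt hm₂0)]
      ring
    rw [hreal]
    push_cast
    ring
end
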